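/- arXiv:1006.5730 — 11 statements merged into one kernel-verified Lean document; each statement's English description precedes it below -/
import Mathlib

section
/- For all integers k, ℓ ≥ 1, the spatial autoregressive process admits the moving-average representation X_{k,ℓ} = Σ_{i=1}^{k} Σ_{j=1}^{ℓ} G(k−i, ℓ−j; α, β, γ) ε_{i,j} (almost surely). -/
open MeasureTheory ProbabilityTheory Filter

/-- `G m n α β γ = Σ_{r=0}^{min(m,n)} ((m+n−r)!/((m−r)!(n−r)!r!)) α^{m−r} β^{n−r} γ^r`. -/
noncomputable def G (m n : ℕ) (α β γ : ℝ) : ℝ :=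
  ∑ r ∈ Finset.range (min m n + 1),
    ((Nat.factorial (m + n - r) : ℝ) /
      ((Nat.factorial (m - r) : ℝ) * (Nat.factorial (n - r) : ℝ) * (Nat.factorial r : ℝ))) *
      α ^ (m - r) * β ^ (n - r) * γ ^ r

noncomputable def c (m n r : ℕ) : ℝ :=
  if r ≤ m ∧ r ≤ n then
    ((Nat.factorial (m + n - r) : ℝ) /
      ((Nat.factorial (m - r) : ℝ) * (Nat.factorial (n - r) : ℝ) * (Nat.factorial r : ℝ)))
  else 0

lemma G_eq_sum (m n : ℕ) (α β γ : ℝ) :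
    G m n α β γ = ∑ r ∈ Finset.range (m + n + 1), c m n r * α ^ (m - r) * β ^ (n - r) * γ ^ r := by
  have h1 : G m n α β γ
      = ∑ r ∈ Finset.range (min m n + 1), c m n r * α ^ (m - r) * β ^ (n - r) * γ ^ r := by
    refine Finset.sum_congr rfl fun r hr => ?_
    rw [Finset.mem_range, Nat.lt_succ_iff, le_min_iff] at hr
    simp [c, hr]
  rw [h1]
  refine Finset.sum_subset ?_ ?_
  · intro r hr
    rw [Finset.mem_range, Nat.lt_succ_iff, le_min_iff] at hr
    rw [Finset.mem_range]
    omega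
  · intro r _ hr'
    rw [Finset.mem_range, Nat.lt_succ_iff, le_min_iff] at hr'
    have h : ¬ (r ≤ m ∧ r ≤ n) := hr'
    simp [c, h]

lemma G_m0 (m : ℕ) (α β γ : ℝ) : G m 0 α β γ = α ^ m := by
  have : (Nat.factorial m : ℝ) ≠ 0 := by positivity
  simp [G, Nat.factorial, div_self this]

lemma G_0n (n : ℕ) (α β γ : ℝ) : G 0 n α β γ = β ^ n := by
  have : (Nat.factorial n : ℝ) ≠ 0 := by positivity
  simp [G, Nat.factorial, div_self this]

lemma fact_ne (k : ℕ) : (Nat.factorial k : ℝ) ≠ 0 := by positivity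

lemma c_formula (r a b : ℕ) :
    c (r+a) (r+b) r = (Nat.factorial (r+a+b) : ℝ) /
      ((Nat.factorial a : ℝ) * (Nat.factorial b : ℝ) * (Nat.factorial r : ℝ)) := by
  have h : r ≤ r + a ∧ r ≤ r + b := ⟨Nat.le_add_right r a, Nat.le_add_right r b⟩
  rw [c, if_pos h]
  have e1 : r + a + (r + b) - r = r + (a + b) := by omega
  have e2 : r + a - r = a := by omega
  have e3 : r + b - r = b := by omega
  rw [e1, e2, e3, ← Nat.add_assoc]

lemma c_zero_succ (m n : ℕ) :
    c (m+1) (n+1) 0 = c m (n+1) 0 + c (m+1) n 0 := by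
  have h1 := c_formula 0 (m+1) (n+1)
  have h2 := c_formula 0 m (n+1)
  have h3 := c_formula 0 (m+1) n
  simp only [Nat.zero_add] at h1 h2 h3
  rw [h1, h2, h3]
  have e : m + 1 + (n + 1) = (m + (n+1)) + 1 := by omega
  rw [e, Nat.factorial_succ (m + (n+1)), Nat.factorial_succ m, Nat.factorial_succ n,
    Nat.factorial_zero]
  have e2 : m + 1 + n = m + (n+1) := by omega
  rw [e2]
  field_simp
  push_cast
  ring

lemma c_succ (m n r : ℕ) :
    c (m+1) (n+1) (r+1) = c m (n+1) (r+1) + c (m+1) n (r+1) + c m n r := by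
  by_cases h : r ≤ m ∧ r ≤ n
  · obtain ⟨a, rfl⟩ := Nat.exists_eq_add_of_le h.1
    obtain ⟨b, rfl⟩ := Nat.exists_eq_add_of_le h.2
    have eL : c (r+a+1) (r+b+1) (r+1) = c ((r+1)+a) ((r+1)+b) (r+1) := by
      congr 1 <;> omega
    have eC := c_formula r a b
    rw [eL, c_formula (r+1) a b, eC]
    rcases a with _ | a <;> rcases b with _ | b
    · have hA : ¬((r+1 : ℕ) ≤ r + 0 ∧ r+1 ≤ r+0+1) := by omega
      have hB : ¬((r+1 : ℕ) ≤ r + 0 + 1 ∧ r+1 ≤ r+0) := by omega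
      rw [c, if_neg hA, c, if_neg hB]
      simp [Nat.factorial_succ, fact_ne]
      field_simp
    · have hA : ¬((r+1 : ℕ) ≤ r + 0 ∧ r+1 ≤ r+(b+1)+1) := by omega
      have eB : c (r+0+1) (r+(b+1)) (r+1) = c ((r+1)+0) ((r+1)+b) (r+1) := by
        congr 1 <;> omega
      rw [c, if_neg hA, eB, c_formula (r+1) 0 b]
      have e1 : r + 1 + (0+1) + b = (r + (0+1) + b) + 1 := by omega
      rw [show r + 1 + 0 + (b+1) = (r + 0 + (b+1)) + 1 from by omega,
        Nat.factorial_succ (r + 0 + (b+1)),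
        show r + 1 + 0 + b = r + 0 + (b+1) from by omega,
        Nat.factorial_succ b, Nat.factorial_succ r]
      field_simp
      push_cast
      ring
    · have hB : ¬((r+1 : ℕ) ≤ r + (a+1) + 1 ∧ r+1 ≤ r+0) := by omega
      have eA : c (r+(a+1)) (r+0+1) (r+1) = c ((r+1)+a) ((r+1)+0) (r+1) := by
        congr 1 <;> omega
      rw [eA, c_formula (r+1) a 0, c, if_neg hB]
      rw [show r + 1 + (a+1) + 0 = (r + (a+1) + 0) + 1 from by omega,
        Nat.factorial_succ (r + (a+1) + 0),
        show r + 1 + a + 0 = r + (a+1) + 0 from by omega,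
        Nat.factorial_succ a, Nat.factorial_succ r]
      field_simp
      push_cast
      ring
    · have eA : c (r+(a+1)) (r+(b+1)+1) (r+1) = c ((r+1)+a) ((r+1)+(b+1)) (r+1) := by
        congr 1 <;> omega
      have eB : c (r+(a+1)+1) (r+(b+1)) (r+1) = c ((r+1)+(a+1)) ((r+1)+b) (r+1) := by
        congr 1 <;> omega
      rw [eA, eB, c_formula (r+1) a (b+1), c_formula (r+1) (a+1) b]
      rw [show r + 1 + (a+1) + (b+1) = (r + (a+1) + (b+1)) + 1 from by omega,
        Nat.factorial_succ (r + (a+1) + (b+1)),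
        show r + 1 + a + (b+1) = r + (a+1) + (b+1) from by omega,
        show r + 1 + (a+1) + b = r + (a+1) + (b+1) from by omega,
        Nat.factorial_succ a, Nat.factorial_succ b, Nat.factorial_succ r]
      field_simp
      push_cast
      ring
  · have h1 : ¬(r+1 ≤ m+1 ∧ r+1 ≤ n+1) := by omega
    have h2 : ¬(r+1 ≤ m ∧ r+1 ≤ n+1) := by omega
    have h3 : ¬(r+1 ≤ m+1 ∧ r+1 ≤ n) := by omega
    have h2' : ¬(r+1 ≤ m ∧ r ≤ n) := by omega
    have h3' : ¬(r ≤ m ∧ r+1 ≤ n) := by omega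
    simp only [c, if_neg h, if_neg h1, if_neg h2, if_neg h3, add_zero]

lemma term_succ (m n r : ℕ) (α β γ : ℝ) :
    c (m+1) (n+1) (r+1) * α ^ (m - r) * β ^ (n - r) * γ ^ (r+1)
      = α * (c m (n+1) (r+1) * α ^ (m - (r+1)) * β ^ (n - r) * γ ^ (r+1))
      + β * (c (m+1) n (r+1) * α ^ (m - r) * β ^ (n - (r+1)) * γ ^ (r+1))
      + γ * (c m n r * α ^ (m - r) * β ^ (n - r) * γ ^ r) := by
  rw [c_succ]
  have hA : α * (c m (n+1) (r+1) * α ^ (m - (r+1)) * β ^ (n - r) * γ ^ (r+1))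
      = c m (n+1) (r+1) * α ^ (m - r) * β ^ (n - r) * γ ^ (r+1) := by
    by_cases hm : r + 1 ≤ m
    · rw [show m - r = (m - (r+1)) + 1 from by omega, pow_succ]; ring
    · have hc : ¬(r+1 ≤ m ∧ r+1 ≤ n+1) := fun hh => hm hh.1
      rw [c, if_neg hc]; ring
  have hB : β * (c (m+1) n (r+1) * α ^ (m - r) * β ^ (n - (r+1)) * γ ^ (r+1))
      = c (m+1) n (r+1) * α ^ (m - r) * β ^ (n - r) * γ ^ (r+1) := by
    by_cases hn : r + 1 ≤ n
    · rw [show n - r = (n - (r+1)) + 1 from by omega, pow_succ]; ring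
    · have hc : ¬(r+1 ≤ m+1 ∧ r+1 ≤ n) := fun hh => hn hh.2
      rw [c, if_neg hc]; ring
  rw [hA, hB, pow_succ γ r]
  ring

lemma term_zero (m n : ℕ) (α β γ : ℝ) :
    c (m+1) (n+1) 0 * α ^ (m+1) * β ^ (n+1) * γ ^ 0
      = α * (c m (n+1) 0 * α ^ m * β ^ (n+1) * γ ^ 0)
      + β * (c (m+1) n 0 * α ^ (m+1) * β ^ n * γ ^ 0) := by
  rw [c_zero_succ, pow_succ α m, pow_succ β n]
  ring

lemma G_rec (m n : ℕ) (α β γ : ℝ) :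
    G (m+1) (n+1) α β γ
      = α * G m (n+1) α β γ + β * G (m+1) n α β γ + γ * G m n α β γ := by
  rw [G_eq_sum, G_eq_sum, G_eq_sum, G_eq_sum]
  rw [show m+1+(n+1)+1 = ((m+n+1)+1)+1 from by omega,
      show m+(n+1)+1 = (m+n+1)+1 from by omega,
      show m+1+n+1 = (m+n+1)+1 from by omega]
  rw [Finset.sum_range_succ'
    (fun r => c (m+1) (n+1) r * α ^ (m+1 - r) * β ^ (n+1 - r) * γ ^ r) ((m+n+1)+1)]
  rw [Finset.sum_range_succ
    (fun r => c (m+1) (n+1) (r+1) * α ^ (m+1 - (r+1)) * β ^ (n+1 - (r+1)) * γ ^ (r+1)) (m+n+1)]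
  rw [Finset.sum_range_succ'
    (fun r => c m (n+1) r * α ^ (m - r) * β ^ (n+1 - r) * γ ^ r) (m+n+1)]
  rw [Finset.sum_range_succ'
    (fun r => c (m+1) n r * α ^ (m+1 - r) * β ^ (n - r) * γ ^ r) (m+n+1)]
  have htop : c (m+1) (n+1) ((m+n+1)+1) = 0 := by
    rw [c, if_neg]; omega
  simp only [Nat.succ_sub_succ_eq_sub, Nat.sub_zero, htop]
  have hsum : ∑ r ∈ Finset.range (m+n+1),
      c (m+1) (n+1) (r+1) * α ^ (m - r) * β ^ (n - r) * γ ^ (r+1)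
      = ∑ r ∈ Finset.range (m+n+1),
        (α * (c m (n+1) (r+1) * α ^ (m - (r+1)) * β ^ (n - r) * γ ^ (r+1))
        + β * (c (m+1) n (r+1) * α ^ (m - r) * β ^ (n - (r+1)) * γ ^ (r+1))
        + γ * (c m n r * α ^ (m - r) * β ^ (n - r) * γ ^ r)) := by
    refine Finset.sum_congr rfl fun r _ => term_succ m n r α β γ
  rw [hsum]
  rw [Finset.sum_add_distrib, Finset.sum_add_distrib, ← Finset.mul_sum, ← Finset.mul_sum,
    ← Finset.mul_sum]
  have hz := term_zero m n α β γ
  simp only [pow_zero, mul_one] at hz ⊢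
  rw [hz]
  ring

lemma double_peel (F : ℕ → ℕ → ℝ) (k ℓ : ℕ) :
    ∑ i ∈ Finset.Icc 1 (k+1), ∑ j ∈ Finset.Icc 1 (ℓ+1), F i j
    = (∑ i ∈ Finset.Icc 1 k, ∑ j ∈ Finset.Icc 1 ℓ, F i j)
    + (∑ i ∈ Finset.Icc 1 k, F i (ℓ+1))
    + (∑ j ∈ Finset.Icc 1 ℓ, F (k+1) j)
    + F (k+1) (ℓ+1) := by
  have h1 : ∀ i, ∑ j ∈ Finset.Icc 1 (ℓ+1), F i j
      = (∑ j ∈ Finset.Icc 1 ℓ, F i j) + F i (ℓ+1) :=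
    fun i => Finset.sum_Icc_succ_top (by omega) _
  simp only [h1]
  rw [Finset.sum_Icc_succ_top (show (1:ℕ) ≤ k+1 by omega), Finset.sum_add_distrib]
  ring

lemma S_rec (α β γ : ℝ) (e : ℕ → ℕ → ℝ) (k ℓ : ℕ) :
    (∑ i ∈ Finset.Icc 1 (k+1), ∑ j ∈ Finset.Icc 1 (ℓ+1), G (k+1-i) (ℓ+1-j) α β γ * e i j)
    = α * (∑ i ∈ Finset.Icc 1 k, ∑ j ∈ Finset.Icc 1 (ℓ+1), G (k-i) (ℓ+1-j) α β γ * e i j)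
    + β * (∑ i ∈ Finset.Icc 1 (k+1), ∑ j ∈ Finset.Icc 1 ℓ, G (k+1-i) (ℓ-j) α β γ * e i j)
    + γ * (∑ i ∈ Finset.Icc 1 k, ∑ j ∈ Finset.Icc 1 ℓ, G (k-i) (ℓ-j) α β γ * e i j)
    + e (k+1) (ℓ+1) := by
  rw [double_peel (fun i j => G (k+1-i) (ℓ+1-j) α β γ * e i j) k ℓ]
  -- peel inner sum of the α-term
  have hα : (∑ i ∈ Finset.Icc 1 k, ∑ j ∈ Finset.Icc 1 (ℓ+1), G (k-i) (ℓ+1-j) α β γ * e i j)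
      = (∑ i ∈ Finset.Icc 1 k, ∑ j ∈ Finset.Icc 1 ℓ, G (k-i) (ℓ+1-j) α β γ * e i j)
      + (∑ i ∈ Finset.Icc 1 k, G (k-i) 0 α β γ * e i (ℓ+1)) := by
    rw [← Finset.sum_add_distrib]
    refine Finset.sum_congr rfl fun i _ => ?_
    have := Finset.sum_Icc_succ_top (show (1:ℕ) ≤ ℓ+1 by omega)
      (fun j => G (k-i) (ℓ+1-j) α β γ * e i j)
    simpa using this
  -- peel outer sum of the β-term
  have hβ : (∑ i ∈ Finset.Icc 1 (k+1), ∑ j ∈ Finset.Icc 1 ℓ, G (k+1-i) (ℓ-j) α β γ * e i j)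
      = (∑ i ∈ Finset.Icc 1 k, ∑ j ∈ Finset.Icc 1 ℓ, G (k+1-i) (ℓ-j) α β γ * e i j)
      + (∑ j ∈ Finset.Icc 1 ℓ, G 0 (ℓ-j) α β γ * e (k+1) j) := by
    have := Finset.sum_Icc_succ_top (show (1:ℕ) ≤ k+1 by omega)
      (fun i => ∑ j ∈ Finset.Icc 1 ℓ, G (k+1-i) (ℓ-j) α β γ * e i j)
    simpa using this
  rw [hα, hβ]
  simp only [Nat.sub_self]
  -- main block
  have hmain : (∑ i ∈ Finset.Icc 1 k, ∑ j ∈ Finset.Icc 1 ℓ, G (k+1-i) (ℓ+1-j) α β γ * e i j)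
      = α * (∑ i ∈ Finset.Icc 1 k, ∑ j ∈ Finset.Icc 1 ℓ, G (k-i) (ℓ+1-j) α β γ * e i j)
      + β * (∑ i ∈ Finset.Icc 1 k, ∑ j ∈ Finset.Icc 1 ℓ, G (k+1-i) (ℓ-j) α β γ * e i j)
      + γ * (∑ i ∈ Finset.Icc 1 k, ∑ j ∈ Finset.Icc 1 ℓ, G (k-i) (ℓ-j) α β γ * e i j) := by
    simp only [Finset.mul_sum, ← Finset.sum_add_distrib]
    refine Finset.sum_congr rfl fun i hi => ?_
    refine Finset.sum_congr rfl fun j hj => ?_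
    rw [Finset.mem_Icc] at hi hj
    rw [show k+1-i = (k-i)+1 from by omega, show ℓ+1-j = (ℓ-j)+1 from by omega,
      G_rec (k-i) (ℓ-j) α β γ]
    ring
  -- edge i-sum
  have hedge1 : (∑ i ∈ Finset.Icc 1 k, G (k+1-i) 0 α β γ * e i (ℓ+1))
      = α * (∑ i ∈ Finset.Icc 1 k, G (k-i) 0 α β γ * e i (ℓ+1)) := by
    rw [Finset.mul_sum]
    refine Finset.sum_congr rfl fun i hi => ?_
    rw [Finset.mem_Icc] at hi
    rw [G_m0, G_m0, show k+1-i = (k-i)+1 from by omega, pow_succ]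
    ring
  -- edge j-sum
  have hedge2 : (∑ j ∈ Finset.Icc 1 ℓ, G 0 (ℓ+1-j) α β γ * e (k+1) j)
      = β * (∑ j ∈ Finset.Icc 1 ℓ, G 0 (ℓ-j) α β γ * e (k+1) j) := by
    rw [Finset.mul_sum]
    refine Finset.sum_congr rfl fun j hj => ?_
    rw [Finset.mem_Icc] at hj
    rw [G_0n, G_0n, show ℓ+1-j = (ℓ-j)+1 from by omega, pow_succ]
    ring
  have hcorner : G 0 0 α β γ = 1 := by rw [G_m0]; norm_num
  rw [hmain, hedge1, hedge2, hcorner]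
  ring

theorem moving_average_representation
    {Ω : Type*} [MeasurableSpace Ω] (P : Measure Ω) [IsProbabilityMeasure P]
    (ε : ℕ → ℕ → Ω → ℝ)
    (hmeas : ∀ k ℓ : ℕ, Measurable (ε k ℓ))
    (hindep : iIndepFun
      (fun p : {p : ℕ × ℕ // 1 ≤ p.1 ∧ 1 ≤ p.2} => ε p.1.1 p.1.2) P)
    (hmean : ∀ k ℓ : ℕ, 1 ≤ k → 1 ≤ ℓ → ∫ ω, ε k ℓ ω ∂P = 0)
    (hvar : ∀ k ℓ : ℕ, 1 ≤ k → 1 ≤ ℓ → variance (ε k ℓ) P = 1)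
    (α β γ : ℝ)
    (X : ℕ → ℕ → Ω → ℝ)
    (hrec : ∀ k ℓ : ℕ, 1 ≤ k → 1 ≤ ℓ → ∀ ω : Ω,
      X k ℓ ω = α * X (k - 1) ℓ ω + β * X k (ℓ - 1) ω + γ * X (k - 1) (ℓ - 1) ω + ε k ℓ ω)
    (hbd1 : ∀ k : ℕ, ∀ ω : Ω, X k 0 ω = 0)
    (hbd2 : ∀ ℓ : ℕ, ∀ ω : Ω, X 0 ℓ ω = 0) :
    ∀ k ℓ : ℕ, 1 ≤ k → 1 ≤ ℓ →
      ∀ᵐ ω ∂P, X k ℓ ω =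
        ∑ i ∈ Finset.Icc 1 k, ∑ j ∈ Finset.Icc 1 ℓ, G (k - i) (ℓ - j) α β γ * ε i j ω := by
  have hempty : Finset.Icc 1 0 = (∅ : Finset ℕ) := Finset.Icc_eq_empty (by omega)
  have main : ∀ k ℓ : ℕ, ∀ ω : Ω, X k ℓ ω =
      ∑ i ∈ Finset.Icc 1 k, ∑ j ∈ Finset.Icc 1 ℓ, G (k - i) (ℓ - j) α β γ * ε i j ω := by
    intro k
    induction k with
    | zero => intro ℓ ω; rw [hbd2, hempty, Finset.sum_empty]
    | succ k ihk =>
      intro ℓ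
      induction ℓ with
      | zero =>
        intro ω
        rw [hbd1, hempty]
        simp
      | succ ℓ ihℓ =>
        intro ω
        rw [hrec (k+1) (ℓ+1) (by omega) (by omega) ω]
        simp only [Nat.add_sub_cancel]
        rw [ihk (ℓ+1) ω, ihℓ ω, ihk ℓ ω]
        exact (S_rec α β γ (fun i j => ε i j ω) k ℓ).symm
  intro k ℓ _ _
  exact Filter.Eventually.of_forall fun ω => main k ℓ ω
end

section
/- Let m, n be nonnegative integers and let α, β, γ be reals with 0 ≤ α < 1, 0 ≤ β < 1 and αβ + γ > 0. Then G(m,n;α,β,γ) = ((α+γ)/(1−β))^m · P( ξ_n^{(β)} + η_m^{((αβ+γ)/(α+γ))} = n ), where ξ_n^{(β)} and η_m^{((αβ+γ)/(α+γ))} are independent binomial random variables with parameters (n, β) and (m, (αβ+γ)/(α+γ)) respectively (note 0 < (αβ+γ)/(α+γ) ≤ 1 under the hypotheses). -/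
open MeasureTheory ProbabilityTheory Filter

/-- The probability that a binomial random variable with parameters `(n, p)` equals `k`. -/
noncomputable def binomPMF (n : ℕ) (p : ℝ) (k : ℕ) : ℝ :=
  (n.choose k : ℝ) * p ^ k * (1 - p) ^ (n - k)

/-- The probability that the sum of two independent binomial random variables, with
parameters `(n, p)` and `(m, q)` respectively, equals `j`. -/
noncomputable def probSumEq (n : ℕ) (p : ℝ) (m : ℕ) (q : ℝ) (j : ℕ) : ℝ :=
  ∑ i ∈ Finset.range (j + 1), binomPMF n p i * binomPMF m q (j - i)

/-- Vandermonde-type sum. -/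
lemma vander_aux (m n k : ℕ) (hkm : k ≤ m) :
    ∑ j ∈ Finset.range (m - k + 1), (m - k).choose j * n.choose (k + j)
      = (m + n - k).choose m := by
  have h1 : m + n - k = (m - k) + n := by omega
  rw [h1, Nat.add_choose_eq, Finset.Nat.sum_antidiagonal_eq_sum_range_succ_mk]
  -- RHS : ∑ i ∈ range (m+1), (m-k).choose i * n.choose (m - i)
  have h2 : ∑ i ∈ Finset.range (m + 1), (m - k).choose i * n.choose (m - i)
      = ∑ i ∈ Finset.range (m - k + 1), (m - k).choose i * n.choose (m - i) := by
    refine (Finset.sum_subset (Finset.range_subset_range.2 (by omega)) ?_).symm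
    intro i hi hni
    simp only [Finset.mem_range] at hi hni
    rw [Nat.choose_eq_zero_of_lt (by omega), zero_mul]
  rw [h2, ← Finset.sum_range_reflect]
  refine Finset.sum_congr rfl fun j hj => ?_
  simp only [Finset.mem_range] at hj
  have hj' : j ≤ m - k := by omega
  have e0 : m - k + 1 - 1 - j = m - k - j := by omega
  have e3 : k + (m - k - j) = m - j := by omega
  rw [e0, e3, Nat.choose_symm hj']

/-- The key natural-number identity. -/
lemma nat_id (m n k : ℕ) (hkm : k ≤ m) (hkn : k ≤ n) :
    ∑ r ∈ Finset.Icc k (min m n), m.choose r * n.choose r * r.choose k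
      = m.choose k * (m + n - k).choose m := by
  have hstep : ∑ r ∈ Finset.Icc k (min m n), m.choose r * n.choose r * r.choose k
      = ∑ r ∈ Finset.Icc k m, m.choose r * n.choose r * r.choose k := by
    refine Finset.sum_subset (Finset.Icc_subset_Icc_right (min_le_left _ _)) ?_
    intro r hr hnr
    simp only [Finset.mem_Icc] at hr hnr
    have : n < r := by omega
    rw [Nat.choose_eq_zero_of_lt this]
    ring
  rw [hstep]
  have hstep2 : ∑ r ∈ Finset.Icc k m, m.choose r * n.choose r * r.choose k
      = ∑ r ∈ Finset.Icc k m, m.choose k * ((m - k).choose (r - k) * n.choose r) := by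
    refine Finset.sum_congr rfl fun r hr => ?_
    simp only [Finset.mem_Icc] at hr
    have := Nat.choose_mul (n := m) hr.1
    calc m.choose r * n.choose r * r.choose k
        = m.choose r * r.choose k * n.choose r := by ring
      _ = m.choose k * (m - k).choose (r - k) * n.choose r := by rw [this]
      _ = m.choose k * ((m - k).choose (r - k) * n.choose r) := by ring
  rw [hstep2, ← Finset.mul_sum]
  congr 1
  have : Finset.Icc k m = Finset.Ico k (m + 1) := rfl
  rw [this, Finset.sum_Ico_eq_sum_range]
  have hr : m + 1 - k = m - k + 1 := by omega
  rw [hr, ← vander_aux m n k hkm]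
  refine Finset.sum_congr rfl fun j hj => ?_
  have : k + j - k = j := by omega
  rw [this]

/-- Cast of coefficient. -/
lemma coeff_cast (m n k : ℕ) (hkm : k ≤ m) (hkn : k ≤ n) :
    ((Nat.factorial (m + n - k) : ℝ) /
      ((Nat.factorial (m - k) : ℝ) * (Nat.factorial (n - k) : ℝ) * (Nat.factorial k : ℝ)))
      = ((m.choose k * (m + n - k).choose m : ℕ) : ℝ) := by
  have hm : m ≤ m + n - k := by omega
  have e : m + n - k - m = n - k := by omega
  push_cast
  rw [Nat.cast_choose ℝ hkm, Nat.cast_choose ℝ hm, e]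
  have f1 : (Nat.factorial (m - k) : ℝ) ≠ 0 := Nat.cast_ne_zero.2 (Nat.factorial_ne_zero _)
  have f2 : (Nat.factorial (n - k) : ℝ) ≠ 0 := Nat.cast_ne_zero.2 (Nat.factorial_ne_zero _)
  have f3 : (Nat.factorial k : ℝ) ≠ 0 := Nat.cast_ne_zero.2 (Nat.factorial_ne_zero _)
  have f4 : (Nat.factorial m : ℝ) ≠ 0 := Nat.cast_ne_zero.2 (Nat.factorial_ne_zero _)
  field_simp

theorem G_eq_binom_prob_first (m n : ℕ) (α β γ : ℝ)
    (hα0 : 0 ≤ α) (hα1 : α < 1) (hβ0 : 0 ≤ β) (hβ1 : β < 1) (hγ : 0 < α * β + γ) :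
    G m n α β γ =
      ((α + γ) / (1 - β)) ^ m * probSumEq n β m ((α * β + γ) / (α + γ)) n := by
  have h1β : (0:ℝ) < 1 - β := by linarith
  have hαγ : (0:ℝ) < α + γ := by nlinarith [mul_nonneg hα0 (sub_nonneg.2 hβ1.le)]
  set N := min m n with hN
  set q : ℝ := (α * β + γ) / (α + γ) with hq
  -- Step A: reflect the sum in probSumEq
  have stepA : probSumEq n β m q n
      = ∑ r ∈ Finset.range (n + 1), binomPMF n β (n - r) * binomPMF m q r := by
    rw [probSumEq, ← Finset.sum_range_reflect]
    refine Finset.sum_congr rfl fun r hr => ?_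
    simp only [Finset.mem_range] at hr
    have e1 : n + 1 - 1 - r = n - r := by omega
    have e2 : n - (n - r) = r := by omega
    rw [e1, e2]
  -- Step B: restrict to range (N+1)
  have stepB : ∑ r ∈ Finset.range (n + 1), binomPMF n β (n - r) * binomPMF m q r
      = ∑ r ∈ Finset.range (N + 1), binomPMF n β (n - r) * binomPMF m q r := by
    refine (Finset.sum_subset (Finset.range_subset_range.2 (by omega)) ?_).symm
    intro r hr hnr
    simp only [Finset.mem_range] at hr hnr
    have : m < r := by omega
    simp [binomPMF, Nat.choose_eq_zero_of_lt this]
  -- Step C: per-term algebra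
  have stepC : ∀ r ∈ Finset.range (N + 1),
      ((α + γ) / (1 - β)) ^ m * (binomPMF n β (n - r) * binomPMF m q r)
        = ((m.choose r * n.choose r : ℕ) : ℝ) * (α ^ (m - r) * β ^ (n - r) * (α * β + γ) ^ r) := by
    intro r hr
    simp only [Finset.mem_range] at hr
    have hrm : r ≤ m := by omega
    have hrn : r ≤ n := by omega
    have e2 : n - (n - r) = r := by omega
    have eq1 : (1 : ℝ) - q = α * (1 - β) / (α + γ) := by
      rw [hq]; field_simp; ring
    have csym : (n.choose (n - r) : ℝ) = (n.choose r : ℝ) := by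
      rw [Nat.choose_symm hrn]
    rw [binomPMF, binomPMF, e2, eq1, csym, hq]
    have hm : (α + γ) ^ m = (α + γ) ^ r * (α + γ) ^ (m - r) := by
      rw [← pow_add]; congr 1; omega
    have hb : (1 - β) ^ m = (1 - β) ^ r * (1 - β) ^ (m - r) := by
      rw [← pow_add]; congr 1; omega
    rw [div_pow, div_pow, div_pow, mul_pow, hm, hb]
    push_cast
    field_simp
  -- Combine A,B,C
  rw [stepA, stepB, Finset.mul_sum, Finset.sum_congr rfl stepC]
  -- Step D: expand (αβ+γ)^r and swap sums
  have stepD : ∀ r ∈ Finset.range (N + 1),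
      ((m.choose r * n.choose r : ℕ) : ℝ) * (α ^ (m - r) * β ^ (n - r) * (α * β + γ) ^ r)
        = ∑ k ∈ Finset.range (r + 1),
            ((m.choose r * n.choose r * r.choose k : ℕ) : ℝ)
              * (α ^ (m - k) * β ^ (n - k) * γ ^ k) := by
    intro r hr
    simp only [Finset.mem_range] at hr
    have hrm : r ≤ m := by omega
    have hrn : r ≤ n := by omega
    have hpow : (α * β + γ) ^ r
        = ∑ k ∈ Finset.range (r + 1), γ ^ k * (α * β) ^ (r - k) * (r.choose k : ℝ) := by
      rw [show α * β + γ = γ + α * β by ring, add_pow]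
    rw [hpow]
    simp only [Finset.mul_sum]
    refine Finset.sum_congr rfl fun k hk => ?_
    simp only [Finset.mem_range] at hk
    have hkr : k ≤ r := by omega
    have ea : m - k = (m - r) + (r - k) := by omega
    have eb : n - k = (n - r) + (r - k) := by omega
    rw [ea, eb, pow_add, pow_add, mul_pow]
    push_cast
    ring
  rw [Finset.sum_congr rfl stepD]
  have swap : ∑ r ∈ Finset.range (N + 1), ∑ k ∈ Finset.range (r + 1),
      ((m.choose r * n.choose r * r.choose k : ℕ) : ℝ)
        * (α ^ (m - k) * β ^ (n - k) * γ ^ k)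
      = ∑ k ∈ Finset.range (N + 1), ∑ r ∈ Finset.Icc k N,
      ((m.choose r * n.choose r * r.choose k : ℕ) : ℝ)
        * (α ^ (m - k) * β ^ (n - k) * γ ^ k) := by
    refine Finset.sum_comm' ?_
    intro r k
    simp only [Finset.mem_range, Finset.mem_Icc]
    omega
  rw [swap]
  rw [G]
  refine Finset.sum_congr rfl fun k hk => ?_
  simp only [Finset.mem_range] at hk
  have hkm : k ≤ m := by omega
  have hkn : k ≤ n := by omega
  rw [← Finset.sum_mul, ← Nat.cast_sum, nat_id m n k hkm hkn, ← coeff_cast m n k hkm hkn]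
  ring
end

section
/- Let m, n be nonnegative integers and let α, β, γ be reals with 0 ≤ α < 1, 0 ≤ β < 1 and αβ + γ > 0. Then G(m,n;α,β,γ) = ((β+γ)/(1−α))^n · P( ξ_m^{(α)} + η_n^{((αβ+γ)/(β+γ))} = m ), where ξ_m^{(α)} and η_n^{((αβ+γ)/(β+γ))} are independent binomial random variables with parameters (m, α) and (n, (αβ+γ)/(β+γ)) respectively (note 0 < (αβ+γ)/(β+γ) ≤ 1 under the hypotheses). -/
open MeasureTheory ProbabilityTheory Filter

lemma vander (a b k : ℕ) :
    ∑ t ∈ Finset.range (k+1), a.choose t * b.choose (k - t) = (a+b).choose k := by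
  rw [Nat.add_choose_eq, Finset.Nat.sum_antidiagonal_eq_sum_range_succ_mk]

lemma key_nat (m n r : ℕ) (hrm : r ≤ m) (hrn : r ≤ n) :
    ∑ s ∈ Finset.Ico r (min m n + 1), m.choose s * n.choose s * s.choose r
      = m.choose r * (m + n - r).choose (n - r) := by
  have h1 : ∀ s ∈ Finset.Ico r (min m n + 1),
      m.choose s * n.choose s * s.choose r
        = m.choose r * ((m-r).choose (s-r) * n.choose s) := by
    intro s hs
    simp only [Finset.mem_Ico] at hs
    have hsm : s ≤ m := by omega
    rw [mul_right_comm, Nat.choose_mul (n := m) hs.1]; ring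
  rw [Finset.sum_congr rfl h1, ← Finset.mul_sum]
  congr 1
  rw [Finset.sum_Ico_eq_sum_range]
  have e1 : ∀ t ∈ Finset.range (min m n + 1 - r),
      (m-r).choose (r+t-r) * n.choose (r+t) = (m-r).choose t * n.choose (r+t) := by
    intro t _; rw [show r + t - r = t by omega]
  rw [Finset.sum_congr rfl e1]
  have hsub : Finset.range (min m n + 1 - r) ⊆ Finset.range (n - r + 1) := by
    apply Finset.range_subset_range.2; omega
  rw [Finset.sum_subset hsub (by
    intro t ht hnt
    simp only [Finset.mem_range] at ht hnt
    have hmn : m ≤ n := by omega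
    have : m - r < t := by omega
    simp [Nat.choose_eq_zero_of_lt this])]
  have e2 : ∀ t ∈ Finset.range (n - r + 1),
      (m-r).choose t * n.choose (r+t) = (m-r).choose t * n.choose ((n-r) - t) := by
    intro t ht
    simp only [Finset.mem_range] at ht
    congr 1
    rw [← Nat.choose_symm (show r + t ≤ n by omega)]
    congr 1; omega
  rw [Finset.sum_congr rfl e2, vander]
  congr 1; omega

lemma fact_eq (m n r : ℕ) (hrm : r ≤ m) (hrn : r ≤ n) :
    ((m+n-r).factorial : ℝ) /
      (((m-r).factorial : ℝ) * ((n-r).factorial : ℝ) * (r.factorial : ℝ))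
      = (m.choose r : ℝ) * ((m+n-r).choose (n-r) : ℝ) := by
  have h1 : m.choose r * r.factorial * (m-r).factorial = m.factorial :=
    Nat.choose_mul_factorial_mul_factorial hrm
  have h2 : (m+n-r).choose (n-r) * (n-r).factorial * ((m+n-r)-(n-r)).factorial
      = (m+n-r).factorial := Nat.choose_mul_factorial_mul_factorial (by omega)
  rw [show (m+n-r)-(n-r) = m by omega] at h2
  have key : m.choose r * (m+n-r).choose (n-r) *
      ((m-r).factorial * (n-r).factorial * r.factorial) = (m+n-r).factorial := by
    rw [← h2, ← h1]; ring
  have keyR := congrArg (Nat.cast : ℕ → ℝ) key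
  push_cast at keyR
  rw [div_eq_iff (by positivity)]
  linarith [keyR]

theorem G_eq_binom_prob_second (m n : ℕ) (α β γ : ℝ)
    (hα0 : 0 ≤ α) (hα1 : α < 1) (hβ0 : 0 ≤ β) (hβ1 : β < 1) (hγ : 0 < α * β + γ) :
    G m n α β γ =
      ((β + γ) / (1 - α)) ^ n * probSumEq m α n ((α * β + γ) / (β + γ)) m := by
  have hB : 0 < β + γ := by nlinarith
  have hA : 0 < 1 - α := by linarith
  -- per-term computation
  have term : ∀ i ∈ Finset.range (m+1),
      ((β + γ)/(1-α))^n * (binomPMF m α i * binomPMF n ((α*β+γ)/(β+γ)) (m - i)) =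
      (m.choose (m - (m-i)) : ℝ) * (n.choose (m-i) : ℝ) * α^(m-(m-i)) * β^(n-(m-i))
        * (α*β+γ)^(m-i) := by
    intro i hi
    simp only [Finset.mem_range] at hi
    have him : i ≤ m := by omega
    rw [show m - (m - i) = i by omega]
    unfold binomPMF
    rcases le_or_gt (m - i) n with hs | hs
    · have h1q : 1 - (α*β+γ)/(β+γ) = β*(1-α)/(β+γ) := by field_simp; ring
      rw [h1q]
      obtain ⟨t, ht⟩ : ∃ t, n = (m - i) + t := ⟨n - (m-i), by omega⟩
      subst ht
      rw [show (m-i) + t - (m-i) = t by omega, pow_add]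
      have e1 : ((β+γ)/(1-α)) * ((α*β+γ)/(β+γ)) * (1-α) = α*β+γ := by
        field_simp
      have e2 : ((β+γ)/(1-α)) * (β*(1-α)/(β+γ)) = β := by
        field_simp
      have p1 : ((β+γ)/(1-α))^(m-i) * ((α*β+γ)/(β+γ))^(m-i) * (1-α)^(m-i)
          = (α*β+γ)^(m-i) := by rw [← mul_pow, ← mul_pow, e1]
      have p2 : ((β+γ)/(1-α))^t * (β*(1-α)/(β+γ))^t = β^t := by
        rw [← mul_pow, e2]
      calc ((β+γ)/(1-α))^(m-i) * ((β+γ)/(1-α))^t *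
            ((m.choose i : ℝ) * α^i * (1-α)^(m-i) *
              (((m-i+t).choose (m-i) : ℝ) * ((α*β+γ)/(β+γ))^(m-i) * (β*(1-α)/(β+γ))^t))
          = ((m.choose i : ℝ) * ((m-i+t).choose (m-i) : ℝ) * α^i) *
              (((β+γ)/(1-α))^(m-i) * ((α*β+γ)/(β+γ))^(m-i) * (1-α)^(m-i)) *
              (((β+γ)/(1-α))^t * (β*(1-α)/(β+γ))^t) := by ring
        _ = _ := by rw [p1, p2]; ring
    · have h0 : n.choose (m-i) = 0 := Nat.choose_eq_zero_of_lt hs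
      simp [h0]
  -- F s
  set F : ℕ → ℝ := fun s =>
    (m.choose (m-s) : ℝ) * (n.choose s : ℝ) * α^(m-s) * β^(n-s) * (α*β+γ)^s with hF
  have step1 : ((β + γ) / (1 - α)) ^ n * probSumEq m α n ((α * β + γ) / (β + γ)) m
      = ∑ s ∈ Finset.range (m+1), F s := by
    unfold probSumEq
    rw [Finset.mul_sum, Finset.sum_congr rfl term]
    have hrefl := Finset.sum_range_reflect F (m+1)
    simp only [Nat.add_sub_cancel] at hrefl
    exact hrefl
  have step2 : ∑ s ∈ Finset.range (m+1), F s
      = ∑ s ∈ Finset.range (min m n + 1), F s := by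
    refine (Finset.sum_subset (Finset.range_subset_range.2 (by omega)) ?_).symm
    intro s hs hns
    simp only [Finset.mem_range] at hs hns
    have : n < s := by omega
    simp [hF, Nat.choose_eq_zero_of_lt this]
  -- g s r
  set g : ℕ → ℕ → ℝ := fun s r =>
    ((m.choose s : ℝ) * (n.choose s : ℝ) * (s.choose r : ℝ)) *
      (α^(m-r) * β^(n-r) * γ^r) with hg
  have step3 : ∀ s ∈ Finset.range (min m n + 1),
      F s = ∑ r ∈ Finset.range (s+1), g s r := by
    intro s hs
    simp only [Finset.mem_range] at hs
    have hsm : s ≤ m := by omega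
    have hsn : s ≤ n := by omega
    simp only [hF, hg]
    rw [Nat.choose_symm hsm, show (α*β+γ) = (γ + α*β) by ring, add_pow,
      Finset.mul_sum]
    refine Finset.sum_congr rfl ?_
    intro r hr
    simp only [Finset.mem_range] at hr
    rw [show m - r = (m-s)+(s-r) by omega, show n - r = (n-s)+(s-r) by omega,
      pow_add, pow_add, mul_pow]
    push_cast
    ring
  have step4 : ∑ s ∈ Finset.range (min m n + 1), ∑ r ∈ Finset.range (s+1), g s r
      = ∑ r ∈ Finset.range (min m n + 1), ∑ s ∈ Finset.Ico r (min m n + 1), g s r := by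
    have h : ∀ s ∈ Finset.range (min m n + 1),
        ∑ r ∈ Finset.range (s+1), g s r
          = ∑ r ∈ Finset.range (min m n + 1), if r ≤ s then g s r else 0 := by
      intro s hs
      simp only [Finset.mem_range] at hs
      rw [← Finset.sum_filter]
      refine Finset.sum_congr ?_ (fun _ _ => rfl)
      ext r
      simp only [Finset.mem_range, Finset.mem_filter]
      omega
    rw [Finset.sum_congr rfl h, Finset.sum_comm]
    refine Finset.sum_congr rfl ?_
    intro r _
    rw [← Finset.sum_filter]
    refine Finset.sum_congr ?_ (fun _ _ => rfl)
    ext s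
    simp only [Finset.mem_range, Finset.mem_filter, Finset.mem_Ico]
    omega
  have step5 : ∀ r ∈ Finset.range (min m n + 1),
      ∑ s ∈ Finset.Ico r (min m n + 1), g s r
        = ((Nat.factorial (m + n - r) : ℝ) /
            ((Nat.factorial (m - r) : ℝ) * (Nat.factorial (n - r) : ℝ) *
              (Nat.factorial r : ℝ))) * (α^(m-r) * β^(n-r) * γ^r) := by
    intro r hr
    simp only [Finset.mem_range] at hr
    have hrm : r ≤ m := by omega
    have hrn : r ≤ n := by omega
    simp only [hg]
    rw [← Finset.sum_mul]
    congr 1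
    rw [fact_eq m n r hrm hrn, ← Nat.cast_mul, ← key_nat m n r hrm hrn]
    push_cast
    rfl
  calc G m n α β γ
      = ∑ r ∈ Finset.range (min m n + 1),
          ((Nat.factorial (m + n - r) : ℝ) /
            ((Nat.factorial (m - r) : ℝ) * (Nat.factorial (n - r) : ℝ) *
              (Nat.factorial r : ℝ))) * (α^(m-r) * β^(n-r) * γ^r) := by
        unfold G; exact Finset.sum_congr rfl (fun r _ => by ring)
    _ = ∑ r ∈ Finset.range (min m n + 1), ∑ s ∈ Finset.Ico r (min m n + 1), g s r :=
        (Finset.sum_congr rfl step5).symm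
    _ = ∑ s ∈ Finset.range (min m n + 1), ∑ r ∈ Finset.range (s+1), g s r := step4.symm
    _ = ∑ s ∈ Finset.range (min m n + 1), F s := (Finset.sum_congr rfl step3).symm
    _ = ∑ s ∈ Finset.range (m+1), F s := step2.symm
    _ = ((β + γ) / (1 - α)) ^ n * probSumEq m α n ((α * β + γ) / (β + γ)) m := step1.symm
end

section
/- Let m, n be nonnegative integers and let α, β, γ be reals with 0 ≤ α < 1, 0 ≤ β < 1 and α + β + γ = 1. Then G(m,n;α,β,γ) = P( ξ_m^{(α)} + η_n^{(1−β)} = m ) = P( ξ_n^{(β)} + η_m^{(1−α)} = n ), where in each probability the two binomial random variables are independent with the indicated parameters. -/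
open MeasureTheory ProbabilityTheory Filter

lemma vand (m n s : ℕ) (hsm : s ≤ m) (hsn : s ≤ n) :
    ∑ r ∈ Finset.range (min m n + 1), m.choose r * n.choose r * r.choose s
      = m.choose s * (m + n - s).choose (n - s) := by
  have hstep1 : ∑ r ∈ Finset.range (min m n + 1), m.choose r * n.choose r * r.choose s
      = ∑ r ∈ Finset.Ico s (min m n + 1), m.choose r * n.choose r * r.choose s := by
    rw [Finset.range_eq_Ico, ← Finset.sum_Ico_consecutive _ (Nat.zero_le s)
      (by omega : s ≤ min m n + 1)]
    have : ∑ r ∈ Finset.Ico 0 s, m.choose r * n.choose r * r.choose s = 0 :=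
      Finset.sum_eq_zero fun r hr => by
        rw [Nat.choose_eq_zero_of_lt (Finset.mem_Ico.mp hr).2, Nat.mul_zero]
    rw [this, Nat.zero_add]
  rw [hstep1, Finset.sum_Ico_eq_sum_range]
  have hstep2 : ∀ k ∈ Finset.range (min m n + 1 - s),
      m.choose (s + k) * n.choose (s + k) * (s + k).choose s
        = m.choose s * ((m - s).choose k * n.choose (s + k)) := by
    intro k hk
    rw [Finset.mem_range] at hk
    have h1 : s + k ≤ m := by omega
    have h2 : m.choose (s + k) * (s + k).choose s = m.choose s * (m - s).choose k := by
      have := Nat.choose_mul (n := m) (Nat.le_add_right s k)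
      simpa using this
    calc m.choose (s + k) * n.choose (s + k) * (s + k).choose s
        = m.choose (s + k) * (s + k).choose s * n.choose (s + k) := by ring
      _ = m.choose s * (m - s).choose k * n.choose (s + k) := by rw [h2]
      _ = m.choose s * ((m - s).choose k * n.choose (s + k)) := by ring
  rw [Finset.sum_congr rfl hstep2, ← Finset.mul_sum]
  congr 1
  have hext : ∑ k ∈ Finset.range (min m n + 1 - s), (m - s).choose k * n.choose (s + k)
      = ∑ k ∈ Finset.range (n - s + 1), (m - s).choose k * n.choose (s + k) := by
    apply Finset.sum_subset
    · intro x hx; rw [Finset.mem_range] at *; omega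
    · intro x hx hnx
      rw [Finset.mem_range] at hx hnx
      rw [Nat.choose_eq_zero_of_lt (by omega : m - s < x), Nat.zero_mul]
  rw [hext]
  have hsym : ∀ k ∈ Finset.range (n - s + 1),
      (m - s).choose k * n.choose (s + k) = (m - s).choose k * n.choose (n - s - k) := by
    intro k hk
    rw [Finset.mem_range] at hk
    have h1 : s + k ≤ n := by omega
    rw [← Nat.choose_symm h1]
    congr 2
    omega
  rw [Finset.sum_congr rfl hsym]
  have := Nat.add_choose_eq (m - s) n (n - s)
  rw [Finset.Nat.sum_antidiagonal_eq_sum_range_succ_mk] at this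
  rw [← this]
  congr 1
  omega


lemma coeff_eq (m n s : ℕ) (hsm : s ≤ m) (hsn : s ≤ n) :
    ((Nat.factorial (m + n - s) : ℝ) /
      ((Nat.factorial (m - s) : ℝ) * (Nat.factorial (n - s) : ℝ) * (Nat.factorial s : ℝ)))
      = (m.choose s : ℝ) * ((m + n - s).choose (n - s) : ℝ) := by
  have key : m.choose s * (m + n - s).choose (n - s)
      * (Nat.factorial (m - s) * Nat.factorial (n - s) * Nat.factorial s)
      = Nat.factorial (m + n - s) := by
    have h1 := Nat.choose_mul_factorial_mul_factorial hsm
    have h2 := Nat.choose_mul_factorial_mul_factorial (show n - s ≤ m + n - s by omega)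
    have h3 : m + n - s - (n - s) = m := by omega
    rw [h3] at h2
    calc m.choose s * (m + n - s).choose (n - s)
        * (Nat.factorial (m - s) * Nat.factorial (n - s) * Nat.factorial s)
        = (m + n - s).choose (n - s) * Nat.factorial (n - s)
            * (m.choose s * Nat.factorial s * Nat.factorial (m - s)) := by ring
      _ = (m + n - s).choose (n - s) * Nat.factorial (n - s) * Nat.factorial m := by rw [h1]
      _ = Nat.factorial (m + n - s) := h2
  rw [div_eq_iff (by positivity)]
  push_cast [← key]
  ring

lemma main_lemma (m n : ℕ) (α β : ℝ) :
    G m n α β (1 - α - β) = probSumEq m α n (1 - β) m := by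
  have step1 : probSumEq m α n (1 - β) m
      = ∑ r ∈ Finset.range (min m n + 1),
          (m.choose r : ℝ) * (n.choose r : ℝ) * α ^ (m - r) * β ^ (n - r)
            * ((1 - α) * (1 - β)) ^ r := by
    unfold probSumEq binomPMF
    rw [← Finset.sum_range_reflect]
    have h1 : ∀ r ∈ Finset.range (m + 1),
        (↑(m.choose (m + 1 - 1 - r)) * α ^ (m + 1 - 1 - r) * (1 - α) ^ (m - (m + 1 - 1 - r)))
          * (↑(n.choose (m - (m + 1 - 1 - r))) * (1 - β) ^ (m - (m + 1 - 1 - r))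
            * (1 - (1 - β)) ^ (n - (m - (m + 1 - 1 - r))))
        = (m.choose r : ℝ) * (n.choose r : ℝ) * α ^ (m - r) * β ^ (n - r)
            * ((1 - α) * (1 - β)) ^ r := by
      intro r hr
      rw [Finset.mem_range] at hr
      have e1 : m + 1 - 1 - r = m - r := by omega
      have e2 : m - (m - r) = r := by omega
      have e3 : m.choose (m - r) = m.choose r := Nat.choose_symm (by omega)
      rw [e1, e2, e3, mul_pow]
      ring
    rw [Finset.sum_congr rfl h1]
    symm
    apply Finset.sum_subset
    · intro x hx; rw [Finset.mem_range] at *; omega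
    · intro x hx hnx
      rw [Finset.mem_range] at hx hnx
      rw [Nat.choose_eq_zero_of_lt (show n < x by omega)]
      push_cast; ring
  rw [step1]
  have expand : ∀ r ∈ Finset.range (min m n + 1),
      (m.choose r : ℝ) * (n.choose r : ℝ) * α ^ (m - r) * β ^ (n - r)
        * ((1 - α) * (1 - β)) ^ r
      = ∑ s ∈ Finset.range (min m n + 1),
          ((m.choose r * n.choose r * r.choose s : ℕ) : ℝ)
            * α ^ (m - s) * β ^ (n - s) * (1 - α - β) ^ s := by
    intro r hr
    rw [Finset.mem_range] at hr
    rw [show (1 - α) * (1 - β) = (1 - α - β) + α * β by ring, add_pow]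
    rw [Finset.mul_sum]
    have h2 : ∀ s ∈ Finset.range (r + 1),
        (m.choose r : ℝ) * (n.choose r : ℝ) * α ^ (m - r) * β ^ (n - r)
          * ((1 - α - β) ^ s * (α * β) ^ (r - s) * (r.choose s : ℝ))
        = ((m.choose r * n.choose r * r.choose s : ℕ) : ℝ)
            * α ^ (m - s) * β ^ (n - s) * (1 - α - β) ^ s := by
      intro s hs
      rw [Finset.mem_range] at hs
      have hsr : s ≤ r := by omega
      have ea : α ^ (m - r) * α ^ (r - s) = α ^ (m - s) := by
        rw [← pow_add]; congr 1; omega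
      have eb : β ^ (n - r) * β ^ (r - s) = β ^ (n - s) := by
        rw [← pow_add]; congr 1; omega
      push_cast
      rw [mul_pow (α) (β), ← ea, ← eb]
      ring
    rw [Finset.sum_congr rfl h2]
    apply Finset.sum_subset
    · intro x hx; rw [Finset.mem_range] at *; omega
    · intro x hx hnx
      rw [Finset.mem_range] at hx hnx
      rw [Nat.choose_eq_zero_of_lt (show r < x by omega)]
      push_cast; ring
  rw [Finset.sum_congr rfl expand, Finset.sum_comm]
  unfold G
  apply Finset.sum_congr rfl
  intro s hs
  rw [Finset.mem_range] at hs
  have hsm : s ≤ m := by omega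
  have hsn : s ≤ n := by omega
  rw [coeff_eq m n s hsm hsn]
  rw [← Nat.cast_mul, ← vand m n s hsm hsn]
  push_cast
  rw [Finset.sum_mul, Finset.sum_mul, Finset.sum_mul]

lemma G_symm (m n : ℕ) (α β γ : ℝ) : G m n α β γ = G n m β α γ := by
  unfold G
  rw [min_comm n m]
  apply Finset.sum_congr rfl
  intro r _
  rw [show n + m = m + n from Nat.add_comm n m]
  ring

theorem G_eq_binom_prob_boundary (m n : ℕ) (α β γ : ℝ)
    (hα0 : 0 ≤ α) (hα1 : α < 1) (hβ0 : 0 ≤ β) (hβ1 : β < 1) (hsum : α + β + γ = 1) :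
    G m n α β γ = probSumEq m α n (1 - β) m ∧
      G m n α β γ = probSumEq n β m (1 - α) n := by
  constructor
  · have h := main_lemma m n α β
    rw [show (1 : ℝ) - α - β = γ by linarith] at h
    exact h
  · have h := main_lemma n m β α
    rw [show (1 : ℝ) - β - α = γ by linarith] at h
    rw [G_symm m n α β γ]
    exact h
end

section
/- If the real parameters satisfy |α| + |β| + |γ| < 1, then for all integers k₁, ℓ₁, k₂, ℓ₂ ≥ 1: |Cov(X_{k₁,ℓ₁}, X_{k₂,ℓ₂})| ≤ (|α|+|β|+|γ|)^{(|k₁−k₂|+|ℓ₁−ℓ₂|)/2} / (1 − (|α|+|β|+|γ|))². -/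
open MeasureTheory ProbabilityTheory Filter Finset

/-- The covariance of two real random variables. -/
noncomputable def cov {Ω : Type*} [MeasurableSpace Ω] (P : Measure Ω) (X Y : Ω → ℝ) : ℝ :=
  ∫ ω, (X ω - ∫ x, X x ∂P) * (Y ω - ∫ x, Y x ∂P) ∂P

namespace CovAux

def coef (α β γ : ℝ) : ℕ → ℕ → ℝ
  | 0, 0 => 1
  | 0, j+1 => β * coef α β γ 0 j
  | i+1, 0 => α * coef α β γ i 0
  | i+1, j+1 => α * coef α β γ i (j+1) + β * coef α β γ (i+1) j + γ * coef α β γ i j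

lemma abs_coef_le_max (α β γ : ℝ) (h1 : |α| + |β| + |γ| ≤ 1) :
    ∀ N i j, i + j ≤ N → |coef α β γ i j| ≤ (|α| + |β| + |γ|) ^ (max i j) := by
  set ρ := |α| + |β| + |γ| with hρ
  have hρ0 : 0 ≤ ρ := by
    have := abs_nonneg α; have := abs_nonneg β; have := abs_nonneg γ; linarith
  have hα : |α| ≤ ρ := by
    have := abs_nonneg β; have := abs_nonneg γ; rw [hρ]; linarith
  have hβ : |β| ≤ ρ := by
    have := abs_nonneg α; have := abs_nonneg γ; rw [hρ]; linarith
  have hγ : |γ| ≤ ρ := by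
    have := abs_nonneg α; have := abs_nonneg β; rw [hρ]; linarith
  have hmono : ∀ {m n : ℕ}, m ≤ n → ρ ^ n ≤ ρ ^ m := fun h => pow_le_pow_of_le_one hρ0 h1 h
  intro N
  induction N with
  | zero =>
    intro i j h
    obtain ⟨rfl, rfl⟩ : i = 0 ∧ j = 0 := by omega
    simp [coef]
  | succ N ih =>
    intro i j h
    match i, j with
    | 0, 0 => simp [coef]
    | 0, j+1 =>
      have hc := ih 0 j (by omega)
      calc |coef α β γ 0 (j+1)| = |β| * |coef α β γ 0 j| := by rw [coef, abs_mul]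
        _ ≤ ρ * ρ ^ (max 0 j) := by
            apply mul_le_mul hβ hc (abs_nonneg _) hρ0
        _ = ρ ^ (max 0 j + 1) := by ring
        _ ≤ ρ ^ (max 0 (j+1)) := hmono (by omega)
    | i+1, 0 =>
      have hc := ih i 0 (by omega)
      calc |coef α β γ (i+1) 0| = |α| * |coef α β γ i 0| := by rw [coef, abs_mul]
        _ ≤ ρ * ρ ^ (max i 0) := by
            apply mul_le_mul hα hc (abs_nonneg _) hρ0
        _ = ρ ^ (max i 0 + 1) := by ring
        _ ≤ ρ ^ (max (i+1) 0) := hmono (by omega)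
    | i+1, j+1 =>
      have h1' := ih i (j+1) (by omega)
      have h2' := ih (i+1) j (by omega)
      have h3' := ih i j (by omega)
      have e1 : ρ ^ (max i (j+1)) ≤ ρ ^ (max i j) := hmono (by omega)
      have e2 : ρ ^ (max (i+1) j) ≤ ρ ^ (max i j) := hmono (by omega)
      have key : |coef α β γ (i+1) (j+1)| ≤
          |α| * ρ ^ (max i j) + |β| * ρ ^ (max i j) + |γ| * ρ ^ (max i j) := by
        rw [coef]
        refine (abs_add_three _ _ _).trans ?_
        simp only [abs_mul]
        gcongr <;> first
          | exact abs_nonneg _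
          | exact h1'.trans e1
          | exact h2'.trans e2
      refine key.trans ?_
      have : max (i+1) (j+1) = max i j + 1 := by omega
      rw [this, pow_succ]
      ring_nf
      nlinarith [pow_nonneg hρ0 (max i j)]

lemma abs_coef_le (α β γ : ℝ) (h1 : |α| + |β| + |γ| ≤ 1) (i j : ℕ) :
    |coef α β γ i j| ≤ Real.sqrt (|α| + |β| + |γ|) ^ (i + j) := by
  set ρ := |α| + |β| + |γ| with hρ
  have hρ0 : 0 ≤ ρ := by
    have := abs_nonneg α; have := abs_nonneg β; have := abs_nonneg γ; linarith
  have hr0 : 0 ≤ Real.sqrt ρ := Real.sqrt_nonneg _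
  have hr1 : Real.sqrt ρ ≤ 1 := Real.sqrt_le_one.mpr h1
  have h2 : ρ ^ (max i j) = Real.sqrt ρ ^ (2 * max i j) := by
    rw [pow_mul, Real.sq_sqrt hρ0]
  calc |coef α β γ i j| ≤ ρ ^ (max i j) := abs_coef_le_max α β γ h1 (i+j) i j le_rfl
    _ = Real.sqrt ρ ^ (2 * max i j) := h2
    _ ≤ Real.sqrt ρ ^ (i + j) := pow_le_pow_of_le_one hr0 hr1 (by omega)

variable {Ω : Type*}

lemma X_repr (α β γ : ℝ) (ε X : ℕ → ℕ → Ω → ℝ)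
    (hrec : ∀ k ℓ : ℕ, 1 ≤ k → 1 ≤ ℓ → ∀ ω : Ω,
      X k ℓ ω = α * X (k - 1) ℓ ω + β * X k (ℓ - 1) ω + γ * X (k - 1) (ℓ - 1) ω + ε k ℓ ω)
    (hbd1 : ∀ k : ℕ, ∀ ω : Ω, X k 0 ω = 0)
    (hbd2 : ∀ ℓ : ℕ, ∀ ω : Ω, X 0 ℓ ω = 0) :
    ∀ N k ℓ : ℕ, k + ℓ ≤ N → ∀ ω : Ω,
      X k ℓ ω = ∑ i ∈ range k, ∑ j ∈ range ℓ, coef α β γ i j * ε (k - i) (ℓ - j) ω := by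
  intro N
  induction N with
  | zero =>
    intro k ℓ h ω
    obtain ⟨rfl, rfl⟩ : k = 0 ∧ ℓ = 0 := by omega
    simp [hbd1]
  | succ N ih =>
    intro k ℓ h ω
    match k, ℓ with
    | 0, ℓ => simp [hbd2]
    | k+1, 0 => simp [hbd1]
    | K+1, L+1 =>
      rw [hrec (K+1) (L+1) (by omega) (by omega) ω]
      simp only [Nat.add_sub_cancel]
      rw [ih K (L+1) (by omega) ω, ih (K+1) L (by omega) ω, ih K L (by omega) ω]
      simp only [Finset.sum_range_succ', Nat.add_sub_add_right, Nat.sub_zero, coef]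
      simp only [Finset.mul_sum, Finset.sum_add_distrib, add_mul, mul_add, one_mul]
      simp only [mul_assoc]
      ring

lemma geom_aux {ρ : ℝ} (h0 : 0 ≤ ρ) (h1 : ρ < 1) (K : ℕ) :
    ∑ u ∈ Icc 1 K, ρ ^ (K - u) ≤ 1 / (1 - ρ) := by
  have key : ∑ u ∈ Icc 1 K, ρ ^ (K - u) = ∑ t ∈ range K, ρ ^ t := by
    apply Finset.sum_nbij' (i := fun u => K - u) (j := fun t => K - t)
    · intro u hu; simp only [Finset.mem_Icc] at hu; simp only [Finset.mem_range]; omega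
    · intro t ht; simp only [Finset.mem_range] at ht; simp only [Finset.mem_Icc]; omega
    · intro u hu; simp only [Finset.mem_Icc] at hu; omega
    · intro t ht; simp only [Finset.mem_range] at ht; omega
    · intro u hu; rfl
  rw [key, geom_sum_eq h1.ne K]
  have hρK : 0 ≤ ρ ^ K := pow_nonneg h0 K
  have h2 : (ρ ^ K - 1) / (ρ - 1) = (1 - ρ ^ K) / (1 - ρ) := by
    rw [← neg_div_neg_eq]; ring_nf
  rw [h2]
  gcongr
  · linarith

end CovAux
theorem cov_bound_stable
    {Ω : Type*} [MeasurableSpace Ω] (P : Measure Ω) [IsProbabilityMeasure P]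
    (ε : ℕ → ℕ → Ω → ℝ)
    (hmeas : ∀ k ℓ : ℕ, Measurable (ε k ℓ))
    (hindep : iIndepFun
      (fun p : {p : ℕ × ℕ // 1 ≤ p.1 ∧ 1 ≤ p.2} => ε p.1.1 p.1.2) P)
    (hmean : ∀ k ℓ : ℕ, 1 ≤ k → 1 ≤ ℓ → ∫ ω, ε k ℓ ω ∂P = 0)
    (hvar : ∀ k ℓ : ℕ, 1 ≤ k → 1 ≤ ℓ → variance (ε k ℓ) P = 1)
    (α β γ : ℝ)
    (X : ℕ → ℕ → Ω → ℝ)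
    (hrec : ∀ k ℓ : ℕ, 1 ≤ k → 1 ≤ ℓ → ∀ ω : Ω,
      X k ℓ ω = α * X (k - 1) ℓ ω + β * X k (ℓ - 1) ω + γ * X (k - 1) (ℓ - 1) ω + ε k ℓ ω)
    (hbd1 : ∀ k : ℕ, ∀ ω : Ω, X k 0 ω = 0)
    (hbd2 : ∀ ℓ : ℕ, ∀ ω : Ω, X 0 ℓ ω = 0)
    (hpar : |α| + |β| + |γ| < 1) :
    ∀ k₁ ℓ₁ k₂ ℓ₂ : ℕ, 1 ≤ k₁ → 1 ≤ ℓ₁ → 1 ≤ k₂ → 1 ≤ ℓ₂ →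
      |cov P (X k₁ ℓ₁) (X k₂ ℓ₂)| ≤
        (|α| + |β| + |γ|) ^
            (((((k₁ : ℤ) - k₂).natAbs + ((ℓ₁ : ℤ) - ℓ₂).natAbs : ℕ) : ℝ) / 2) /
          (1 - (|α| + |β| + |γ|)) ^ 2 := by
  intro k₁ ℓ₁ k₂ ℓ₂ hk₁ hℓ₁ hk₂ hℓ₂
  set ρ := |α| + |β| + |γ| with hρdef
  have hρ0 : 0 ≤ ρ := by
    have := abs_nonneg α; have := abs_nonneg β; have := abs_nonneg γ
    rw [hρdef]; linarith
  have hρ1 : ρ < 1 := hpar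
  have h1ρ : 0 < 1 - ρ := by linarith
  set r := Real.sqrt ρ with hrdef
  have hr0 : 0 ≤ r := Real.sqrt_nonneg _
  have hr2 : r ^ 2 = ρ := Real.sq_sqrt hρ0
  -- reindexed representation
  have hXrep : ∀ k ℓ : ℕ, ∀ ω : Ω,
      X k ℓ ω = ∑ p ∈ Icc 1 k ×ˢ Icc 1 ℓ,
        CovAux.coef α β γ (k - p.1) (ℓ - p.2) * ε p.1 p.2 ω := by
    intro k ℓ ω
    rw [CovAux.X_repr α β γ ε X hrec hbd1 hbd2 (k + ℓ) k ℓ le_rfl ω]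
    rw [← Finset.sum_product']
    apply Finset.sum_nbij' (i := fun p => (k - p.1, ℓ - p.2))
      (j := fun p => (k - p.1, ℓ - p.2))
    · intro p hp
      simp only [Finset.mem_product, Finset.mem_range] at hp
      simp only [Finset.mem_product, Finset.mem_Icc]
      omega
    · intro p hp
      simp only [Finset.mem_product, Finset.mem_Icc] at hp
      simp only [Finset.mem_product, Finset.mem_range]
      omega
    · intro p hp
      simp only [Finset.mem_product, Finset.mem_range] at hp
      have h1 : k - (k - p.1) = p.1 := by omega
      have h2 : ℓ - (ℓ - p.2) = p.2 := by omega
      simp [h1, h2]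
    · intro p hp
      simp only [Finset.mem_product, Finset.mem_Icc] at hp
      have h1 : k - (k - p.1) = p.1 := by omega
      have h2 : ℓ - (ℓ - p.2) = p.2 := by omega
      simp [h1, h2]
    · intro p hp
      simp only [Finset.mem_product, Finset.mem_range] at hp
      have h1 : k - (k - p.1) = p.1 := by omega
      have h2 : ℓ - (ℓ - p.2) = p.2 := by omega
      simp [h1, h2]
  -- square integrability
  have hL2 : ∀ u v : ℕ, 1 ≤ u → 1 ≤ v → MemLp (ε u v) 2 P := by
    intro u v hu hv
    by_contra hcon
    have htop : evariance (ε u v) P = ⊤ :=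
      evariance_eq_top (hmeas u v).aestronglyMeasurable hcon
    have h1 := hvar u v hu hv
    have h0 : variance (ε u v) P = 0 := by
      unfold ProbabilityTheory.variance
      rw [htop]; simp
    rw [h0] at h1; norm_num at h1
  have hInt : ∀ u v : ℕ, 1 ≤ u → 1 ≤ v → Integrable (ε u v) P :=
    fun u v hu hv => (hL2 u v hu hv).integrable one_le_two
  have hIntMul : ∀ u v u' v' : ℕ, 1 ≤ u → 1 ≤ v → 1 ≤ u' → 1 ≤ v' →
      Integrable (fun ω => ε u v ω * ε u' v' ω) P := by
    intro u v u' v' hu hv hu' hv'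
    have h2 := (hL2 u v hu hv).integrable_sq
    have h2' := (hL2 u' v' hu' hv').integrable_sq
    refine (h2.add h2').mono' ((hmeas u v).mul (hmeas u' v')).aestronglyMeasurable ?_
    refine Filter.Eventually.of_forall fun ω => ?_
    simp only [Pi.add_apply, Real.norm_eq_abs, abs_mul]
    nlinarith [abs_nonneg (ε u v ω), abs_nonneg (ε u' v' ω),
      sq_abs (ε u v ω), sq_abs (ε u' v' ω),
      sq_nonneg (|ε u v ω| - |ε u' v' ω|)]
  -- orthogonality
  have horth : ∀ u v u' v' : ℕ, (1 ≤ u ∧ 1 ≤ v) → (1 ≤ u' ∧ 1 ≤ v') →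
      ((u, v) : ℕ × ℕ) ≠ (u', v') → ∫ ω, ε u v ω * ε u' v' ω ∂P = 0 := by
    intro u v u' v' h h' hne
    have hind : IndepFun (ε u v) (ε u' v') P :=
      hindep.indepFun (i := ⟨(u, v), h⟩) (j := ⟨(u', v'), h'⟩)
        (by simp only [ne_eq, Subtype.mk.injEq]; exact hne)
    have hmul := IndepFun.integral_mul_eq_mul_integral hind (hmeas u v).aestronglyMeasurable
      (hmeas u' v').aestronglyMeasurable
    calc ∫ ω, ε u v ω * ε u' v' ω ∂P = ∫ ω, (ε u v * ε u' v') ω ∂P := rfl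
      _ = (∫ ω, ε u v ω ∂P) * ∫ ω, ε u' v' ω ∂P := hmul
      _ = 0 := by rw [hmean u v h.1 h.2]; ring
  -- second moment
  have hsq : ∀ u v : ℕ, 1 ≤ u → 1 ≤ v → ∫ ω, ε u v ω * ε u v ω ∂P = 1 := by
    intro u v hu hv
    have hv2 := hvar u v hu hv
    rw [variance_eq_sub (hL2 u v hu hv), hmean u v hu hv] at hv2
    have heq : (ε u v ^ 2 : Ω → ℝ) = fun ω => ε u v ω * ε u v ω := by
      funext ω; simp [pow_two]
    rw [heq] at hv2
    have : ∫ ω, ε u v ω * ε u v ω ∂P - 0 ^ 2 = 1 := hv2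
    linarith [this]
  -- mean zero of X
  have hXmean : ∀ k ℓ : ℕ, ∫ ω, X k ℓ ω ∂P = 0 := by
    intro k ℓ
    have hfun : X k ℓ = fun ω => ∑ p ∈ Icc 1 k ×ˢ Icc 1 ℓ,
        CovAux.coef α β γ (k - p.1) (ℓ - p.2) * ε p.1 p.2 ω := funext (hXrep k ℓ)
    rw [hfun, integral_finset_sum]
    · apply Finset.sum_eq_zero
      intro p hp
      simp only [Finset.mem_product, Finset.mem_Icc] at hp
      rw [integral_const_mul, hmean p.1 p.2 hp.1.1 hp.2.1, mul_zero]
    · intro p hp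
      simp only [Finset.mem_product, Finset.mem_Icc] at hp
      exact ((hInt p.1 p.2 hp.1.1 hp.2.1).const_mul _)
  -- covariance formula
  set s₁ := Icc 1 k₁ ×ˢ Icc 1 ℓ₁ with hs₁
  set s₂ := Icc 1 k₂ ×ˢ Icc 1 ℓ₂ with hs₂
  set a : ℕ × ℕ → ℝ := fun p => CovAux.coef α β γ (k₁ - p.1) (ℓ₁ - p.2) with ha
  set b : ℕ × ℕ → ℝ := fun p => CovAux.coef α β γ (k₂ - p.1) (ℓ₂ - p.2) with hb
  have hcov : cov P (X k₁ ℓ₁) (X k₂ ℓ₂) = ∑ p ∈ s₁ ∩ s₂, a p * b p := by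
    unfold cov
    rw [hXmean k₁ ℓ₁, hXmean k₂ ℓ₂]
    simp only [sub_zero]
    have h1 : (fun ω => X k₁ ℓ₁ ω * X k₂ ℓ₂ ω) =
        fun ω => ∑ p ∈ s₁, ∑ q ∈ s₂, (a p * b q) * (ε p.1 p.2 ω * ε q.1 q.2 ω) := by
      funext ω
      rw [hXrep k₁ ℓ₁ ω, hXrep k₂ ℓ₂ ω, Finset.sum_mul_sum]
      refine Finset.sum_congr rfl fun p _ => Finset.sum_congr rfl fun q _ => by ring
    rw [h1]
    have hintq : ∀ p ∈ s₁, ∀ q ∈ s₂,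
        Integrable (fun ω => (a p * b q) * (ε p.1 p.2 ω * ε q.1 q.2 ω)) P := by
      intro p hp q hq
      simp only [hs₁, Finset.mem_product, Finset.mem_Icc] at hp
      simp only [hs₂, Finset.mem_product, Finset.mem_Icc] at hq
      exact (hIntMul p.1 p.2 q.1 q.2 hp.1.1 hp.2.1 hq.1.1 hq.2.1).const_mul _
    rw [integral_finset_sum _ (fun p hp =>
      integrable_finset_sum _ (fun q hq => hintq p hp q hq))]
    have h2 : ∀ p ∈ s₁, ∫ ω, (∑ q ∈ s₂, (a p * b q) * (ε p.1 p.2 ω * ε q.1 q.2 ω)) ∂P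
        = if p ∈ s₂ then a p * b p else 0 := by
      intro p hp
      rw [integral_finset_sum _ (fun q hq => hintq p hp q hq)]
      have h3 : ∀ q ∈ s₂, ∫ ω, (a p * b q) * (ε p.1 p.2 ω * ε q.1 q.2 ω) ∂P
          = if q = p then a p * b q else 0 := by
        intro q hq
        rw [integral_const_mul]
        simp only [hs₁, Finset.mem_product, Finset.mem_Icc] at hp
        simp only [hs₂, Finset.mem_product, Finset.mem_Icc] at hq
        by_cases hpq : q = p
        · subst hpq
          rw [hsq q.1 q.2 hq.1.1 hq.2.1, if_pos rfl, mul_one]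
        · rw [horth p.1 p.2 q.1 q.2 ⟨hp.1.1, hp.2.1⟩ ⟨hq.1.1, hq.2.1⟩
            (by
              intro hco
              apply hpq
              have e1 : p.1 = q.1 := congrArg Prod.fst hco
              have e2 : p.2 = q.2 := congrArg Prod.snd hco
              exact Prod.ext e1.symm e2.symm),
            mul_zero, if_neg hpq]
      rw [Finset.sum_congr rfl h3, Finset.sum_ite_eq' s₂ p (fun q => a p * b q)]
    rw [Finset.sum_congr rfl h2, Finset.sum_ite_mem, Finset.inter_comm]
  -- intersection
  set K := min k₁ k₂ with hK
  set L := min ℓ₁ ℓ₂ with hL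
  have hKL : s₁ ∩ s₂ = Icc 1 K ×ˢ Icc 1 L := by
    rw [hs₁, hs₂, Finset.product_inter_product]
    congr 1 <;> · ext x; simp only [Finset.mem_inter, Finset.mem_Icc]; omega
  set D : ℕ := ((k₁ : ℤ) - k₂).natAbs + ((ℓ₁ : ℤ) - ℓ₂).natAbs with hD
  -- per-term bound
  have hterm : ∀ p ∈ Icc 1 K ×ˢ Icc 1 L,
      |a p * b p| ≤ r ^ D * (ρ ^ (K - p.1) * ρ ^ (L - p.2)) := by
    intro p hp
    simp only [Finset.mem_product, Finset.mem_Icc] at hp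
    have hρle : ρ ≤ 1 := hρ1.le
    have hb1 := CovAux.abs_coef_le α β γ hρle (k₁ - p.1) (ℓ₁ - p.2)
    have hb2 := CovAux.abs_coef_le α β γ hρle (k₂ - p.1) (ℓ₂ - p.2)
    rw [← hρdef, ← hrdef] at hb1 hb2
    have hexp : (k₁ - p.1 + (ℓ₁ - p.2)) + (k₂ - p.1 + (ℓ₂ - p.2))
        = D + (2 * (K - p.1) + 2 * (L - p.2)) := by
      rw [hD, hK, hL]; omega
    calc |a p * b p| = |a p| * |b p| := abs_mul _ _
      _ ≤ r ^ (k₁ - p.1 + (ℓ₁ - p.2)) * r ^ (k₂ - p.1 + (ℓ₂ - p.2)) := by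
          exact mul_le_mul hb1 hb2 (abs_nonneg _) (pow_nonneg hr0 _)
      _ = r ^ ((k₁ - p.1 + (ℓ₁ - p.2)) + (k₂ - p.1 + (ℓ₂ - p.2))) := (pow_add r _ _).symm
      _ = r ^ D * (ρ ^ (K - p.1) * ρ ^ (L - p.2)) := by
          conv_rhs => rw [← hr2]
          rw [← pow_mul, ← pow_mul, ← pow_add, ← pow_add, hexp]
  -- final computation
  have hpowD : ρ ^ (((D : ℕ) : ℝ) / 2) = r ^ D := by
    rw [hrdef, Real.sqrt_eq_rpow, ← Real.rpow_natCast (ρ ^ ((1:ℝ)/2)) D,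
      ← Real.rpow_mul hρ0]
    congr 1
    ring
  rw [hpowD]
  calc |cov P (X k₁ ℓ₁) (X k₂ ℓ₂)| = |∑ p ∈ Icc 1 K ×ˢ Icc 1 L, a p * b p| := by
        rw [hcov, hKL]
    _ ≤ ∑ p ∈ Icc 1 K ×ˢ Icc 1 L, |a p * b p| := Finset.abs_sum_le_sum_abs _ _
    _ ≤ ∑ p ∈ Icc 1 K ×ˢ Icc 1 L, r ^ D * (ρ ^ (K - p.1) * ρ ^ (L - p.2)) :=
        Finset.sum_le_sum hterm
    _ = r ^ D * ((∑ u ∈ Icc 1 K, ρ ^ (K - u)) * (∑ v ∈ Icc 1 L, ρ ^ (L - v))) := by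
        rw [← Finset.mul_sum, Finset.sum_mul_sum, Finset.sum_product]
    _ ≤ r ^ D * ((1 / (1 - ρ)) * (1 / (1 - ρ))) := by
        have g1 := CovAux.geom_aux hρ0 hρ1 K
        have g2 := CovAux.geom_aux hρ0 hρ1 L
        have n2 : (0:ℝ) ≤ ∑ v ∈ Icc 1 L, ρ ^ (L - v) :=
          Finset.sum_nonneg fun v _ => pow_nonneg hρ0 _
        have h12 : (0:ℝ) ≤ 1 / (1 - ρ) := by positivity
        exact mul_le_mul_of_nonneg_left (mul_le_mul g1 g2 n2 h12) (pow_nonneg hr0 D)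
    _ = r ^ D / (1 - ρ) ^ 2 := by
        rw [sq, div_mul_div_comm, one_mul, mul_one_div]
end

section
/- Suppose the real parameters satisfy αβγ ≤ 0, |α| = 1 and |β| = |γ| < 1. Then for all integers k₁, ℓ₁, k₂, ℓ₂ ≥ 1: |Cov(X_{k₁,ℓ₁}, X_{k₂,ℓ₂})| ≤ min(k₁,k₂) · |γ|^{|ℓ₁−ℓ₂|} / (1 − γ²). -/
open MeasureTheory ProbabilityTheory Filter

open Finset in
lemma key_sum (α β : ℝ) (f : ℕ → ℕ → ℝ) (k ℓ : ℕ) :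
    ∑ i ∈ Icc 1 (k+1), ∑ j ∈ Icc 1 (ℓ+1), α ^ (k+1-i) * β ^ (ℓ+1-j) * f i j
      = α * (∑ i ∈ Icc 1 k, ∑ j ∈ Icc 1 (ℓ+1), α ^ (k-i) * β ^ (ℓ+1-j) * f i j)
        + β * (∑ i ∈ Icc 1 (k+1), ∑ j ∈ Icc 1 ℓ, α ^ (k+1-i) * β ^ (ℓ-j) * f i j)
        + (-(α*β)) * (∑ i ∈ Icc 1 k, ∑ j ∈ Icc 1 ℓ, α ^ (k-i) * β ^ (ℓ-j) * f i j)
        + f (k+1) (ℓ+1) := by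
  have h2 : α * (∑ i ∈ Icc 1 k, ∑ j ∈ Icc 1 (ℓ+1), α ^ (k-i) * β ^ (ℓ+1-j) * f i j)
      = ∑ i ∈ Icc 1 k, ∑ j ∈ Icc 1 (ℓ+1), α ^ (k+1-i) * β ^ (ℓ+1-j) * f i j := by
    rw [mul_sum]
    refine sum_congr rfl fun i hi => ?_
    rw [mul_sum]
    refine sum_congr rfl fun j hj => ?_
    have hik := (mem_Icc.mp hi).2
    rw [show k+1-i = (k-i)+1 by omega, pow_succ]
    ring
  have h3 : β * (∑ i ∈ Icc 1 (k+1), ∑ j ∈ Icc 1 ℓ, α ^ (k+1-i) * β ^ (ℓ-j) * f i j)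
      = (∑ i ∈ Icc 1 k, ∑ j ∈ Icc 1 ℓ, α ^ (k+1-i) * β ^ (ℓ+1-j) * f i j)
        + ∑ j ∈ Icc 1 ℓ, β ^ (ℓ+1-j) * f (k+1) j := by
    rw [Finset.sum_Icc_succ_top (by omega : (1:ℕ) ≤ k+1), mul_add]
    congr 1
    · rw [mul_sum]
      refine sum_congr rfl fun i hi => ?_
      rw [mul_sum]
      refine sum_congr rfl fun j hj => ?_
      have hjl := (mem_Icc.mp hj).2
      rw [show ℓ+1-j = (ℓ-j)+1 by omega, pow_succ]
      ring
    · rw [mul_sum]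
      refine sum_congr rfl fun j hj => ?_
      have hjl := (mem_Icc.mp hj).2
      rw [Nat.sub_self, pow_zero, show ℓ+1-j = (ℓ-j)+1 by omega, pow_succ]
      ring
  have h4 : (-(α*β)) * (∑ i ∈ Icc 1 k, ∑ j ∈ Icc 1 ℓ, α ^ (k-i) * β ^ (ℓ-j) * f i j)
      = -(∑ i ∈ Icc 1 k, ∑ j ∈ Icc 1 ℓ, α ^ (k+1-i) * β ^ (ℓ+1-j) * f i j) := by
    rw [mul_sum, ← Finset.sum_neg_distrib]
    refine sum_congr rfl fun i hi => ?_
    rw [mul_sum, ← Finset.sum_neg_distrib]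
    refine sum_congr rfl fun j hj => ?_
    have hik := (mem_Icc.mp hi).2
    have hjl := (mem_Icc.mp hj).2
    rw [show k+1-i = (k-i)+1 by omega, show ℓ+1-j = (ℓ-j)+1 by omega, pow_succ, pow_succ]
    ring
  rw [h2, h3, h4]
  rw [Finset.sum_Icc_succ_top (by omega : (1:ℕ) ≤ k+1)]
  simp only [Nat.sub_self, pow_zero, one_mul]
  rw [Finset.sum_Icc_succ_top (by omega : (1:ℕ) ≤ ℓ+1)]
  simp only [Nat.sub_self, pow_zero, one_mul]
  ring

open Finset in
lemma icc_geom_le {r : ℝ} (h0 : 0 ≤ r) (h1 : r < 1) (m : ℕ) :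
    ∑ j ∈ Icc 1 m, r ^ (m - j) ≤ (1 - r)⁻¹ := by
  have h1r : (0:ℝ) < 1 - r := by linarith
  induction m with
  | zero => simp [le_of_lt (inv_pos.mpr h1r)]
  | succ m ih =>
    rw [Finset.sum_Icc_succ_top (by omega : (1:ℕ) ≤ m+1), Nat.sub_self, pow_zero]
    have hstep : ∑ j ∈ Icc 1 m, r ^ (m + 1 - j) = (∑ j ∈ Icc 1 m, r ^ (m - j)) * r := by
      rw [Finset.sum_mul]
      refine sum_congr rfl fun j hj => ?_
      have hjm := (mem_Icc.mp hj).2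
      rw [show m+1-j = (m-j)+1 by omega, pow_succ]
    rw [hstep]
    have hkey : (1 - r)⁻¹ * r + 1 = (1 - r)⁻¹ := by field_simp; ring
    have := mul_le_mul_of_nonneg_right ih h0
    linarith

theorem cov_bound_edge_alpha
    {Ω : Type*} [MeasurableSpace Ω] (P : Measure Ω) [IsProbabilityMeasure P]
    (ε : ℕ → ℕ → Ω → ℝ)
    (hmeas : ∀ k ℓ : ℕ, Measurable (ε k ℓ))
    (hindep : iIndepFun
      (fun p : {p : ℕ × ℕ // 1 ≤ p.1 ∧ 1 ≤ p.2} => ε p.1.1 p.1.2) P)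
    (hmean : ∀ k ℓ : ℕ, 1 ≤ k → 1 ≤ ℓ → ∫ ω, ε k ℓ ω ∂P = 0)
    (hvar : ∀ k ℓ : ℕ, 1 ≤ k → 1 ≤ ℓ → variance (ε k ℓ) P = 1)
    (α β γ : ℝ)
    (X : ℕ → ℕ → Ω → ℝ)
    (hrec : ∀ k ℓ : ℕ, 1 ≤ k → 1 ≤ ℓ → ∀ ω : Ω,
      X k ℓ ω = α * X (k - 1) ℓ ω + β * X k (ℓ - 1) ω + γ * X (k - 1) (ℓ - 1) ω + ε k ℓ ω)
    (hbd1 : ∀ k : ℕ, ∀ ω : Ω, X k 0 ω = 0)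
    (hbd2 : ∀ ℓ : ℕ, ∀ ω : Ω, X 0 ℓ ω = 0)
    (hsign : α * β * γ ≤ 0) (hα : |α| = 1) (hβγ : |β| = |γ|) (hγ : |γ| < 1) :
    ∀ k₁ ℓ₁ k₂ ℓ₂ : ℕ, 1 ≤ k₁ → 1 ≤ ℓ₁ → 1 ≤ k₂ → 1 ≤ ℓ₂ →
      |cov P (X k₁ ℓ₁) (X k₂ ℓ₂)| ≤
        ((min k₁ k₂ : ℕ) : ℝ) * |γ| ^ ((ℓ₁ : ℤ) - ℓ₂).natAbs / (1 - γ ^ 2) := by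
  classical
  -- γ = -(α*β)
  have hγαβ : γ = -(α * β) := by
    rcases (abs_eq (by norm_num : (0:ℝ) ≤ 1)).mp hα with h | h <;>
      rcases abs_eq_abs.mp hβγ with h2 | h2 <;> subst h <;> nlinarith [sq_nonneg γ]
  -- representation
  have hXrep : ∀ k ℓ : ℕ, ∀ ω : Ω, X k ℓ ω =
      ∑ i ∈ Finset.Icc 1 k, ∑ j ∈ Finset.Icc 1 ℓ, α ^ (k-i) * β ^ (ℓ-j) * ε i j ω := by
    intro k
    induction k with
    | zero => intro ℓ ω; simp [hbd2]
    | succ k ihk =>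
      intro ℓ
      induction ℓ with
      | zero => intro ω; simp [hbd1]
      | succ ℓ ihl =>
        intro ω
        rw [hrec (k+1) (ℓ+1) (by omega) (by omega) ω]
        simp only [Nat.add_sub_cancel]
        rw [ihk (ℓ+1) ω, ihl ω, ihk ℓ ω, key_sum α β (fun i j => ε i j ω) k ℓ, hγαβ]
  -- L² facts
  have hL2 : ∀ k ℓ : ℕ, 1 ≤ k → 1 ≤ ℓ → MemLp (ε k ℓ) 2 P := by
    intro k ℓ hk hℓ
    rw [← evariance_lt_top_iff_memLp (hmeas k ℓ).aestronglyMeasurable]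
    by_contra hcon
    have htop : evariance (ε k ℓ) P = ⊤ := by
      simpa using hcon
    have := hvar k ℓ hk hℓ
    rw [ProbabilityTheory.variance, htop] at this
    simp at this
  have hint : ∀ k ℓ : ℕ, 1 ≤ k → 1 ≤ ℓ → Integrable (ε k ℓ) P :=
    fun k ℓ hk hℓ => (hL2 k ℓ hk hℓ).integrable one_le_two
  -- second moments
  have hmom : ∀ p q : ℕ × ℕ, 1 ≤ p.1 → 1 ≤ p.2 → 1 ≤ q.1 → 1 ≤ q.2 →
      ∫ ω, ε p.1 p.2 ω * ε q.1 q.2 ω ∂P = if p = q then 1 else 0 := by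
    intro p q hp1 hp2 hq1 hq2
    by_cases hpq : p = q
    · subst hpq
      rw [if_pos rfl]
      have hv := variance_eq_sub (hL2 p.1 p.2 hp1 hp2)
      rw [hvar _ _ hp1 hp2, hmean _ _ hp1 hp2] at hv
      have : ∫ ω, (ε p.1 p.2 ^ 2) ω ∂P = ∫ ω, ε p.1 p.2 ω * ε p.1 p.2 ω ∂P := by
        refine integral_congr_ae (Filter.Eventually.of_forall fun ω => ?_)
        simp [sq]
      simp only [this] at hv
      linarith
    · rw [if_neg hpq]
      have hne : (⟨p, hp1, hp2⟩ : {p : ℕ × ℕ // 1 ≤ p.1 ∧ 1 ≤ p.2})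
          ≠ ⟨q, hq1, hq2⟩ := by simpa using hpq
      have hI := hindep.indepFun hne
      have := hI.integral_mul_eq_mul_integral (hmeas p.1 p.2).aestronglyMeasurable
        (hmeas q.1 q.2).aestronglyMeasurable
      simp only [Pi.mul_apply] at this
      rw [show (∫ ω, ε p.1 p.2 ω * ε q.1 q.2 ω ∂P)
          = ∫ ω, (ε p.1 p.2 * ε q.1 q.2) ω ∂P from rfl]
      rw [show (fun ω => (ε p.1 p.2 * ε q.1 q.2) ω) = ε p.1 p.2 * ε q.1 q.2 from rfl]
      exact this.trans (by rw [hmean _ _ hp1 hp2, hmean _ _ hq1 hq2, mul_zero])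
  -- integrability of products
  have hintmul : ∀ p q : ℕ × ℕ, 1 ≤ p.1 → 1 ≤ p.2 → 1 ≤ q.1 → 1 ≤ q.2 →
      Integrable (fun ω => ε p.1 p.2 ω * ε q.1 q.2 ω) P := by
    intro p q hp1 hp2 hq1 hq2
    by_cases hpq : p = q
    · subst hpq
      have := (hL2 p.1 p.2 hp1 hp2).integrable_sq
      refine this.congr (Filter.Eventually.of_forall fun ω => ?_)
      simp [sq]
    · have hne : (⟨p, hp1, hp2⟩ : {p : ℕ × ℕ // 1 ≤ p.1 ∧ 1 ≤ p.2})
          ≠ ⟨q, hq1, hq2⟩ := by simpa using hpq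
      exact (hindep.indepFun hne).integrable_mul (hint _ _ hp1 hp2) (hint _ _ hq1 hq2)
  -- covariance formula
  have hcov : ∀ (s t : Finset (ℕ × ℕ)) (a b : ℕ × ℕ → ℝ),
      (∀ p ∈ s, 1 ≤ p.1 ∧ 1 ≤ p.2) → (∀ p ∈ t, 1 ≤ p.1 ∧ 1 ≤ p.2) →
      cov P (fun ω => ∑ p ∈ s, a p * ε p.1 p.2 ω) (fun ω => ∑ p ∈ t, b p * ε p.1 p.2 ω)
        = ∑ p ∈ s ∩ t, a p * b p := by
    intro s t a b hs ht
    have hmean_sum : ∀ (u : Finset (ℕ×ℕ)) (c : ℕ×ℕ → ℝ), (∀ p ∈ u, 1 ≤ p.1 ∧ 1 ≤ p.2) →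
        ∫ ω, (∑ p ∈ u, c p * ε p.1 p.2 ω) ∂P = 0 := by
      intro u c hu
      rw [integral_finset_sum u
        (fun p hp => ((hint p.1 p.2 (hu p hp).1 (hu p hp).2).const_mul (c p)))]
      refine Finset.sum_eq_zero fun p hp => ?_
      rw [integral_const_mul, hmean p.1 p.2 (hu p hp).1 (hu p hp).2, mul_zero]
    simp only [cov]
    rw [hmean_sum s a hs, hmean_sum t b ht]
    simp only [sub_zero]
    have hexp : ∀ ω : Ω, (∑ p ∈ s, a p * ε p.1 p.2 ω) * (∑ q ∈ t, b q * ε q.1 q.2 ω)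
        = ∑ p ∈ s, ∑ q ∈ t, (a p * b q) * (ε p.1 p.2 ω * ε q.1 q.2 ω) := by
      intro ω
      rw [Finset.sum_mul_sum]
      exact Finset.sum_congr rfl fun p _ => Finset.sum_congr rfl fun q _ => by ring
    simp only [hexp]
    rw [integral_finset_sum _ (fun p hp => integrable_finset_sum _ (fun q hq =>
      ((hintmul p q (hs p hp).1 (hs p hp).2 (ht q hq).1 (ht q hq).2).const_mul _)))]
    have hrow : ∀ p ∈ s, (∫ ω, ∑ q ∈ t, (a p * b q) * (ε p.1 p.2 ω * ε q.1 q.2 ω) ∂P)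
        = if p ∈ t then a p * b p else 0 := by
      intro p hp
      rw [integral_finset_sum _ (fun q hq =>
        ((hintmul p q (hs p hp).1 (hs p hp).2 (ht q hq).1 (ht q hq).2).const_mul _))]
      have hq : ∀ q ∈ t, (∫ ω, (a p * b q) * (ε p.1 p.2 ω * ε q.1 q.2 ω) ∂P)
          = if p = q then a p * b q else 0 := by
        intro q hq
        rw [integral_const_mul, hmom p q (hs p hp).1 (hs p hp).2 (ht q hq).1 (ht q hq).2]
        by_cases h : p = q <;> simp [h]
      rw [Finset.sum_congr rfl hq, Finset.sum_ite_eq t p (fun q => a p * b q)]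
    rw [Finset.sum_congr rfl hrow, Finset.sum_ite_mem]
  -- final assembly
  intro k₁ ℓ₁ k₂ ℓ₂ hk₁ hℓ₁ hk₂ hℓ₂
  have hXfun : ∀ k ℓ : ℕ, X k ℓ = fun ω => ∑ p ∈ Finset.Icc 1 k ×ˢ Finset.Icc 1 ℓ,
      (fun p : ℕ × ℕ => α ^ (k - p.1) * β ^ (ℓ - p.2)) p * ε p.1 p.2 ω := by
    intro k ℓ; funext ω
    rw [Finset.sum_product]
    exact hXrep k ℓ ω
  rw [hXfun k₁ ℓ₁, hXfun k₂ ℓ₂, hcov _ _ _ _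
    (fun p hp => by
      simp only [Finset.mem_product, Finset.mem_Icc] at hp
      exact ⟨hp.1.1, hp.2.1⟩)
    (fun p hp => by
      simp only [Finset.mem_product, Finset.mem_Icc] at hp
      exact ⟨hp.1.1, hp.2.1⟩)]
  have hinter : (Finset.Icc 1 k₁ ×ˢ Finset.Icc 1 ℓ₁) ∩ (Finset.Icc 1 k₂ ×ˢ Finset.Icc 1 ℓ₂)
      = Finset.Icc 1 (min k₁ k₂) ×ˢ Finset.Icc 1 (min ℓ₁ ℓ₂) := by
    ext p
    simp only [Finset.mem_inter, Finset.mem_product, Finset.mem_Icc]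
    omega
  rw [hinter, Finset.sum_product]
  simp only []
  set mk := min k₁ k₂ with hmk
  set mℓ := min ℓ₁ ℓ₂ with hml
  set d := ((ℓ₁ : ℤ) - ℓ₂).natAbs with hd
  have hγ0 : (0:ℝ) ≤ γ ^ 2 := sq_nonneg γ
  have hγ1 : γ ^ 2 < 1 := by
    have := pow_lt_one₀ (abs_nonneg γ) hγ two_ne_zero
    rwa [sq_abs] at this
  have habs : |∑ i ∈ Finset.Icc 1 mk, ∑ j ∈ Finset.Icc 1 mℓ,
        (α ^ (k₁ - i) * β ^ (ℓ₁ - j)) * (α ^ (k₂ - i) * β ^ (ℓ₂ - j))|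
      ≤ ∑ i ∈ Finset.Icc 1 mk, ∑ j ∈ Finset.Icc 1 mℓ,
        |(α ^ (k₁ - i) * β ^ (ℓ₁ - j)) * (α ^ (k₂ - i) * β ^ (ℓ₂ - j))| :=
    (Finset.abs_sum_le_sum_abs _ _).trans
      (Finset.sum_le_sum fun i _ => Finset.abs_sum_le_sum_abs _ _)
  have hterm : ∀ i ∈ Finset.Icc 1 mk, ∀ j ∈ Finset.Icc 1 mℓ,
      |(α ^ (k₁ - i) * β ^ (ℓ₁ - j)) * (α ^ (k₂ - i) * β ^ (ℓ₂ - j))|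
        = |γ| ^ d * (γ ^ 2) ^ (mℓ - j) := by
    intro i hi j hj
    have hjm := Finset.mem_Icc.mp hj
    rw [abs_mul, abs_mul, abs_mul, abs_pow, abs_pow, abs_pow, abs_pow, hα, one_pow, one_pow,
      one_mul, one_mul, hβγ, ← pow_add]
    have hexp : (ℓ₁ - j) + (ℓ₂ - j) = d + 2 * (mℓ - j) := by
      simp only [hd, hml] at *
      omega
    rw [hexp, pow_add, pow_mul, sq_abs]
  have hsum : ∑ i ∈ Finset.Icc 1 mk, ∑ j ∈ Finset.Icc 1 mℓ,
        |(α ^ (k₁ - i) * β ^ (ℓ₁ - j)) * (α ^ (k₂ - i) * β ^ (ℓ₂ - j))|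
      ≤ (mk : ℝ) * (|γ| ^ d * (1 - γ ^ 2)⁻¹) := by
    have hin : ∀ i ∈ Finset.Icc 1 mk, ∑ j ∈ Finset.Icc 1 mℓ,
        |(α ^ (k₁ - i) * β ^ (ℓ₁ - j)) * (α ^ (k₂ - i) * β ^ (ℓ₂ - j))|
        ≤ |γ| ^ d * (1 - γ ^ 2)⁻¹ := by
      intro i hi
      rw [Finset.sum_congr rfl (hterm i hi), ← Finset.mul_sum]
      exact mul_le_mul_of_nonneg_left (icc_geom_le hγ0 hγ1 mℓ)
        (pow_nonneg (abs_nonneg γ) d)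
    calc ∑ i ∈ Finset.Icc 1 mk, ∑ j ∈ Finset.Icc 1 mℓ,
          |(α ^ (k₁ - i) * β ^ (ℓ₁ - j)) * (α ^ (k₂ - i) * β ^ (ℓ₂ - j))|
        ≤ ∑ i ∈ Finset.Icc 1 mk, |γ| ^ d * (1 - γ ^ 2)⁻¹ := Finset.sum_le_sum hin
      _ = (mk : ℝ) * (|γ| ^ d * (1 - γ ^ 2)⁻¹) := by
          rw [Finset.sum_const, Nat.card_Icc]
          simp [nsmul_eq_mul]
  calc |∑ i ∈ Finset.Icc 1 mk, ∑ j ∈ Finset.Icc 1 mℓ,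
        (α ^ (k₁ - i) * β ^ (ℓ₁ - j)) * (α ^ (k₂ - i) * β ^ (ℓ₂ - j))|
      ≤ (mk : ℝ) * (|γ| ^ d * (1 - γ ^ 2)⁻¹) := habs.trans hsum
    _ = (mk : ℝ) * |γ| ^ d / (1 - γ ^ 2) := by rw [div_eq_mul_inv, mul_assoc]
end

section
/- Suppose the real parameters satisfy αβγ ≤ 0, |β| = 1 and |α| = |γ| < 1. Then for all integers k₁, ℓ₁, k₂, ℓ₂ ≥ 1: |Cov(X_{k₁,ℓ₁}, X_{k₂,ℓ₂})| ≤ min(ℓ₁,ℓ₂) · |γ|^{|k₁−k₂|} / (1 − γ²). -/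
open MeasureTheory ProbabilityTheory Filter

private lemma geom_aux (r : ℝ) (h0 : 0 ≤ r) (h1 : r < 1) (m : ℕ) :
    ∑ i ∈ Finset.Icc 1 m, r ^ (m - i) ≤ 1 / (1 - r) := by
  have h : ∑ i ∈ Finset.Icc 1 m, r ^ (m - i) = ∑ t ∈ Finset.range m, r ^ t := by
    apply Finset.sum_nbij' (fun i => m - i) (fun t => m - t) <;> intros <;>
      simp_all [Finset.mem_Icc, Finset.mem_range] <;> omega
  have hr : (0:ℝ) < 1 - r := by linarith
  rw [h, geom_sum_eq (by linarith : r ≠ 1), show (r ^ m - 1)/(r-1) = (1 - r^m)/(1-r) by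
    rw [← neg_div_neg_eq]; ring_nf]
  rw [div_le_div_iff₀ hr hr]
  nlinarith [pow_nonneg h0 m]

private lemma integrable_mul_aux {Ω : Type*} [MeasurableSpace Ω] {P : Measure Ω}
    [IsProbabilityMeasure P] {f g : Ω → ℝ} (hf : MeasureTheory.MemLp f 2 P)
    (hg : MeasureTheory.MemLp g 2 P) :
    Integrable (fun ω => f ω * g ω) P := by
  have hint : Integrable (fun ω => (f ω ^ 2 + g ω ^ 2) / 2) P :=
    (hf.integrable_sq.add hg.integrable_sq).div_const 2
  refine hint.mono' (hf.aestronglyMeasurable.mul hg.aestronglyMeasurable) ?_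
  filter_upwards with ω
  rw [Real.norm_eq_abs]
  rcases abs_cases (f ω * g ω) with ⟨h, _⟩ | ⟨h, _⟩ <;> rw [h] <;> nlinarith [sq_nonneg (f ω - g ω), sq_nonneg (f ω + g ω)]

theorem cov_bound_edge_beta
    {Ω : Type*} [MeasurableSpace Ω] (P : Measure Ω) [IsProbabilityMeasure P]
    (ε : ℕ → ℕ → Ω → ℝ)
    (hmeas : ∀ k ℓ : ℕ, Measurable (ε k ℓ))
    (hindep : iIndepFun
      (fun p : {p : ℕ × ℕ // 1 ≤ p.1 ∧ 1 ≤ p.2} => ε p.1.1 p.1.2) P)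
    (hmean : ∀ k ℓ : ℕ, 1 ≤ k → 1 ≤ ℓ → ∫ ω, ε k ℓ ω ∂P = 0)
    (hvar : ∀ k ℓ : ℕ, 1 ≤ k → 1 ≤ ℓ → variance (ε k ℓ) P = 1)
    (α β γ : ℝ)
    (X : ℕ → ℕ → Ω → ℝ)
    (hrec : ∀ k ℓ : ℕ, 1 ≤ k → 1 ≤ ℓ → ∀ ω : Ω,
      X k ℓ ω = α * X (k - 1) ℓ ω + β * X k (ℓ - 1) ω + γ * X (k - 1) (ℓ - 1) ω + ε k ℓ ω)
    (hbd1 : ∀ k : ℕ, ∀ ω : Ω, X k 0 ω = 0)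
    (hbd2 : ∀ ℓ : ℕ, ∀ ω : Ω, X 0 ℓ ω = 0)
    (hsign : α * β * γ ≤ 0) (hβ : |β| = 1) (hαγ : |α| = |γ|) (hγ : |γ| < 1) :
    ∀ k₁ ℓ₁ k₂ ℓ₂ : ℕ, 1 ≤ k₁ → 1 ≤ ℓ₁ → 1 ≤ k₂ → 1 ≤ ℓ₂ →
      |cov P (X k₁ ℓ₁) (X k₂ ℓ₂)| ≤
        ((min ℓ₁ ℓ₂ : ℕ) : ℝ) * |γ| ^ ((k₁ : ℤ) - k₂).natAbs / (1 - γ ^ 2) := by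
  -- γ = -(α β)
  have hγαβ : γ = -(α * β) := by
    have habs : |α * β * γ| = γ ^ 2 := by
      rw [abs_mul, abs_mul, hβ, hαγ, ← sq_abs γ]; ring
    have ht : α * β * γ = -γ ^ 2 := by
      have h := abs_of_nonpos hsign; linarith
    have h0 : γ * (α * β + γ) = 0 := by linear_combination ht
    rcases mul_eq_zero.mp h0 with h | h
    · have hα : α = 0 := abs_eq_zero.mp (by rw [hαγ, h, abs_zero])
      simp [h, hα]
    · linarith
  -- representation of the one-dimensional increment
  have hT : ∀ k, 1 ≤ k → ∀ ℓ, ∀ ω, X k ℓ ω - α * X (k - 1) ℓ ω =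
      ∑ j ∈ Finset.Icc 1 ℓ, β ^ (ℓ - j) * ε k j ω := by
    intro k hk ℓ
    induction ℓ with
    | zero => intro ω; simp [hbd1]
    | succ n ih =>
      intro ω
      have hr := hrec k (n + 1) hk (by omega) ω
      simp only [Nat.add_sub_cancel] at hr
      rw [Finset.sum_Icc_succ_top (by omega : 1 ≤ n + 1)]
      have hco : ∀ j ∈ Finset.Icc 1 n, β ^ (n + 1 - j) * ε k j ω
          = β * (β ^ (n - j) * ε k j ω) := by
        intro j hj
        simp only [Finset.mem_Icc] at hj
        rw [← mul_assoc, ← pow_succ']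
        congr 2
        omega
      rw [Finset.sum_congr rfl hco, ← Finset.mul_sum, ← ih ω, Nat.sub_self, pow_zero, one_mul,
        hr, hγαβ]
      ring
  -- full moving-average representation
  have hXrep : ∀ k ℓ, ∀ ω, X k ℓ ω =
      ∑ i ∈ Finset.Icc 1 k, α ^ (k - i) * ∑ j ∈ Finset.Icc 1 ℓ, β ^ (ℓ - j) * ε i j ω := by
    intro k
    induction k with
    | zero => intro ℓ ω; simp [hbd2]
    | succ n ih =>
      intro ℓ ω
      rw [Finset.sum_Icc_succ_top (by omega : 1 ≤ n + 1)]
      have hco : ∀ i ∈ Finset.Icc 1 n,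
          α ^ (n + 1 - i) * ∑ j ∈ Finset.Icc 1 ℓ, β ^ (ℓ - j) * ε i j ω
          = α * (α ^ (n - i) * ∑ j ∈ Finset.Icc 1 ℓ, β ^ (ℓ - j) * ε i j ω) := by
        intro i hi
        simp only [Finset.mem_Icc] at hi
        rw [← mul_assoc, ← pow_succ']
        congr 2
        omega
      have h2 := hT (n + 1) (by omega) ℓ ω
      simp only [Nat.add_sub_cancel] at h2
      rw [Finset.sum_congr rfl hco, ← Finset.mul_sum, ← ih ℓ ω, Nat.sub_self, pow_zero, one_mul,
        ← h2]
      ring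
  -- L² membership and integrability of the noise
  have hmem : ∀ k ℓ : ℕ, 1 ≤ k → 1 ≤ ℓ → MeasureTheory.MemLp (ε k ℓ) 2 P := by
    intro k ℓ hk hℓ
    refine (evariance_lt_top_iff_memLp (hmeas k ℓ).aestronglyMeasurable).mp ?_
    by_contra h
    push_neg at h
    have htop : evariance (ε k ℓ) P = ⊤ := top_le_iff.mp h
    have := hvar k ℓ hk hℓ
    rw [variance, htop] at this
    simp at this
  have hint : ∀ k ℓ : ℕ, 1 ≤ k → 1 ≤ ℓ → Integrable (ε k ℓ) P := by
    intro k ℓ hk hℓ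
    exact (hmem k ℓ hk hℓ).integrable one_le_two
  -- second moments
  have hcross : ∀ p q : ℕ × ℕ, 1 ≤ p.1 → 1 ≤ p.2 → 1 ≤ q.1 → 1 ≤ q.2 →
      ∫ ω, ε p.1 p.2 ω * ε q.1 q.2 ω ∂P = if p = q then 1 else 0 := by
    intro p q hp1 hp2 hq1 hq2
    by_cases hpq : p = q
    · subst hpq
      simp only [if_pos rfl]
      have hv := hvar p.1 p.2 hp1 hp2
      rw [variance_eq_sub (hmem p.1 p.2 hp1 hp2), hmean p.1 p.2 hp1 hp2] at hv
      have : ∫ ω, ε p.1 p.2 ω * ε p.1 p.2 ω ∂P = ∫ ω, (ε p.1 p.2 ω) ^ 2 ∂P := by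
        congr 1; funext ω; ring
      rw [this]
      simpa using hv
    · simp only [if_neg hpq]
      have hne : (⟨p, ⟨hp1, hp2⟩⟩ : {p : ℕ × ℕ // 1 ≤ p.1 ∧ 1 ≤ p.2}) ≠ ⟨q, ⟨hq1, hq2⟩⟩ := by
        simp [Subtype.ext_iff, hpq]
      have hif := hindep.indepFun hne
      have := (hif : IndepFun (ε p.1 p.2) (ε q.1 q.2) P).integral_mul_eq_mul_integral (hint p.1 p.2 hp1 hp2).aestronglyMeasurable (hint q.1 q.2 hq1 hq2).aestronglyMeasurable
      simp only [Pi.mul_apply] at this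
      rw [show (fun ω => ε p.1 p.2 ω * ε q.1 q.2 ω) = (ε p.1 p.2) * (ε q.1 q.2) from rfl] at *
      rw [this, hmean p.1 p.2 hp1 hp2, hmean q.1 q.2 hq1 hq2, mul_zero]
  intro k₁ ℓ₁ k₂ ℓ₂ hk₁ hℓ₁ hk₂ hℓ₂
  set A : Finset (ℕ × ℕ) := Finset.Icc 1 k₁ ×ˢ Finset.Icc 1 ℓ₁ with hA
  set B : Finset (ℕ × ℕ) := Finset.Icc 1 k₂ ×ˢ Finset.Icc 1 ℓ₂ with hB
  set c₁ : ℕ × ℕ → ℝ := fun p => α ^ (k₁ - p.1) * β ^ (ℓ₁ - p.2) with hc₁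
  set c₂ : ℕ × ℕ → ℝ := fun p => α ^ (k₂ - p.1) * β ^ (ℓ₂ - p.2) with hc₂
  have hX1 : ∀ ω, X k₁ ℓ₁ ω = ∑ p ∈ A, c₁ p * ε p.1 p.2 ω := by
    intro ω
    rw [hXrep k₁ ℓ₁ ω, hA, Finset.sum_product]
    simp [hc₁, Finset.mul_sum, mul_assoc]
  have hX2 : ∀ ω, X k₂ ℓ₂ ω = ∑ p ∈ B, c₂ p * ε p.1 p.2 ω := by
    intro ω
    rw [hXrep k₂ ℓ₂ ω, hB, Finset.sum_product]
    simp [hc₂, Finset.mul_sum, mul_assoc]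
  have hmemA : ∀ p ∈ A, 1 ≤ p.1 ∧ 1 ≤ p.2 := by
    intro p hp
    rw [hA, Finset.mem_product, Finset.mem_Icc, Finset.mem_Icc] at hp
    exact ⟨hp.1.1, hp.2.1⟩
  have hmemB : ∀ p ∈ B, 1 ≤ p.1 ∧ 1 ≤ p.2 := by
    intro p hp
    rw [hB, Finset.mem_product, Finset.mem_Icc, Finset.mem_Icc] at hp
    exact ⟨hp.1.1, hp.2.1⟩
  -- means are zero
  have hm1 : ∫ ω, X k₁ ℓ₁ ω ∂P = 0 := by
    simp only [hX1]
    rw [integral_finset_sum _ (fun p hp =>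
      ((hint p.1 p.2 (hmemA p hp).1 (hmemA p hp).2).const_mul _))]
    refine Finset.sum_eq_zero fun p hp => ?_
    rw [integral_const_mul, hmean p.1 p.2 (hmemA p hp).1 (hmemA p hp).2, mul_zero]
  have hm2 : ∫ ω, X k₂ ℓ₂ ω ∂P = 0 := by
    simp only [hX2]
    rw [integral_finset_sum _ (fun p hp =>
      ((hint p.1 p.2 (hmemB p hp).1 (hmemB p hp).2).const_mul _))]
    refine Finset.sum_eq_zero fun p hp => ?_
    rw [integral_const_mul, hmean p.1 p.2 (hmemB p hp).1 (hmemB p hp).2, mul_zero]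
  -- covariance as a sum over common indices
  have hcov : cov P (X k₁ ℓ₁) (X k₂ ℓ₂) = ∑ p ∈ A ∩ B, c₁ p * c₂ p := by
    have hprod : ∀ ω, X k₁ ℓ₁ ω * X k₂ ℓ₂ ω =
        ∑ p ∈ A, ∑ q ∈ B, (c₁ p * c₂ q) * (ε p.1 p.2 ω * ε q.1 q.2 ω) := by
      intro ω
      rw [hX1 ω, hX2 ω, Finset.sum_mul_sum]
      exact Finset.sum_congr rfl fun p _ => Finset.sum_congr rfl fun q _ =>
        mul_mul_mul_comm _ _ _ _
    rw [cov, hm1, hm2]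
    simp only [sub_zero]
    calc ∫ ω, X k₁ ℓ₁ ω * X k₂ ℓ₂ ω ∂P
        = ∑ p ∈ A, ∑ q ∈ B, (c₁ p * c₂ q) *
            (∫ ω, ε p.1 p.2 ω * ε q.1 q.2 ω ∂P) := by
          simp only [hprod]
          rw [integral_finset_sum _ (fun p hp => integrable_finset_sum _ (fun q hq =>
            ((integrable_mul_aux (hmem p.1 p.2 (hmemA p hp).1 (hmemA p hp).2)
              (hmem q.1 q.2 (hmemB q hq).1 (hmemB q hq).2)).const_mul _)))]
          refine Finset.sum_congr rfl fun p hp => ?_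
          rw [integral_finset_sum _ (fun q hq =>
            ((integrable_mul_aux (hmem p.1 p.2 (hmemA p hp).1 (hmemA p hp).2)
              (hmem q.1 q.2 (hmemB q hq).1 (hmemB q hq).2)).const_mul _))]
          exact Finset.sum_congr rfl fun q hq => integral_const_mul _ _
      _ = ∑ p ∈ A, ∑ q ∈ B, (c₁ p * c₂ q) * (if p = q then 1 else 0) := by
          refine Finset.sum_congr rfl fun p hp => Finset.sum_congr rfl fun q hq => ?_
          rw [hcross p q (hmemA p hp).1 (hmemA p hp).2 (hmemB q hq).1 (hmemB q hq).2]
      _ = ∑ p ∈ A ∩ B, c₁ p * c₂ p := by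
          rw [← Finset.sum_ite_mem A B (fun p => c₁ p * c₂ p)]
          refine Finset.sum_congr rfl fun p hp => ?_
          simp only [mul_ite, mul_one, mul_zero, Finset.sum_ite_eq]
  -- the intersection of the index rectangles
  have hAB : A ∩ B = Finset.Icc 1 (min k₁ k₂) ×ˢ Finset.Icc 1 (min ℓ₁ ℓ₂) := by
    rw [hA, hB]
    ext ⟨i, j⟩
    simp only [Finset.mem_inter, Finset.mem_product, Finset.mem_Icc]
    omega
  set m := min k₁ k₂ with hm
  set n := min ℓ₁ ℓ₂ with hn
  set d := ((k₁ : ℤ) - k₂).natAbs with hd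
  have hg2 : γ ^ 2 < 1 := by nlinarith [abs_nonneg γ, sq_abs γ]
  have habsc : ∀ i ∈ Finset.Icc 1 m, ∀ j : ℕ,
      |c₁ (i, j) * c₂ (i, j)| = |γ| ^ d * (γ ^ 2) ^ (m - i) := by
    intro i hi j
    simp only [Finset.mem_Icc] at hi
    simp only [hc₁, hc₂, abs_mul, abs_pow, hβ, hαγ, one_pow, mul_one]
    rw [← pow_add, ← sq_abs γ, ← pow_mul, ← pow_add]
    congr 1
    omega
  rw [hcov, hAB]
  calc |∑ p ∈ Finset.Icc 1 m ×ˢ Finset.Icc 1 n, c₁ p * c₂ p|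
      ≤ ∑ p ∈ Finset.Icc 1 m ×ˢ Finset.Icc 1 n, |c₁ p * c₂ p| :=
        Finset.abs_sum_le_sum_abs _ _
    _ = ∑ i ∈ Finset.Icc 1 m, ∑ j ∈ Finset.Icc 1 n, |c₁ (i, j) * c₂ (i, j)| :=
        Finset.sum_product _ _ _
    _ = ∑ i ∈ Finset.Icc 1 m, (n : ℝ) * (|γ| ^ d * (γ ^ 2) ^ (m - i)) := by
        refine Finset.sum_congr rfl fun i hi => ?_
        rw [Finset.sum_congr rfl (fun j _ => habsc i hi j), Finset.sum_const, Nat.card_Icc,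
          nsmul_eq_mul]
        norm_num
    _ = (n : ℝ) * (|γ| ^ d * ∑ i ∈ Finset.Icc 1 m, (γ ^ 2) ^ (m - i)) := by
        rw [← Finset.mul_sum, ← Finset.mul_sum]
    _ ≤ (n : ℝ) * (|γ| ^ d * (1 / (1 - γ ^ 2))) := by
        have := geom_aux (γ ^ 2) (sq_nonneg γ) hg2 m
        gcongr
    _ = (n : ℝ) * |γ| ^ d / (1 - γ ^ 2) := by ring
end

section
/- Suppose the real parameters satisfy αβγ = −1 and |α| = |β| = |γ| = 1. Then for all integers k₁, ℓ₁, k₂, ℓ₂ ≥ 1: Cov(X_{k₁,ℓ₁}, X_{k₂,ℓ₂}) = min(k₁,k₂) · min(ℓ₁,ℓ₂) · α^{|k₁−k₂|} · β^{|ℓ₁−ℓ₂|}. -/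
open MeasureTheory ProbabilityTheory Filter

lemma sum_Icc_one_succ {M : Type*} [AddCommMonoid M] (n : ℕ) (f : ℕ → M) :
    ∑ i ∈ Finset.Icc 1 (n + 1), f i = (∑ i ∈ Finset.Icc 1 n, f i) + f (n + 1) := by
  rw [← Finset.insert_Icc_right_eq_Icc_add_one (by omega : 1 ≤ n + 1), Finset.sum_insert (by simp)]
  exact add_comm _ _

lemma shift_pow_sum (c : ℝ) (m : ℕ) (g : ℕ → ℝ) :
    ∑ i ∈ Finset.Icc 1 m, c ^ (m + 1 - i) * g i
      = c * ∑ i ∈ Finset.Icc 1 m, c ^ (m - i) * g i := by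
  rw [Finset.mul_sum]
  refine Finset.sum_congr rfl fun i hi => ?_
  rw [Finset.mem_Icc] at hi
  have h : m + 1 - i = (m - i) + 1 := by omega
  rw [h, pow_succ]; ring

lemma split_shift (c : ℝ) (m : ℕ) (g : ℕ → ℝ) :
    ∑ i ∈ Finset.Icc 1 (m + 1), c ^ (m + 1 - i) * g i
      = c * (∑ i ∈ Finset.Icc 1 m, c ^ (m - i) * g i) + g (m + 1) := by
  rw [sum_Icc_one_succ, shift_pow_sum, Nat.sub_self, pow_zero, one_mul]

lemma X_formula {Ω : Type*} (α β : ℝ) (ε X : ℕ → ℕ → Ω → ℝ)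
    (hrec : ∀ k ℓ : ℕ, 1 ≤ k → 1 ≤ ℓ → ∀ ω : Ω, X k ℓ ω =
      α * X (k - 1) ℓ ω + β * X k (ℓ - 1) ω + (-(α * β)) * X (k - 1) (ℓ - 1) ω + ε k ℓ ω)
    (hbd1 : ∀ k : ℕ, ∀ ω : Ω, X k 0 ω = 0)
    (hbd2 : ∀ ℓ : ℕ, ∀ ω : Ω, X 0 ℓ ω = 0) :
    ∀ k ℓ : ℕ, ∀ ω : Ω, X k ℓ ω =
      ∑ i ∈ Finset.Icc 1 k, α ^ (k - i) * ∑ j ∈ Finset.Icc 1 ℓ, β ^ (ℓ - j) * ε i j ω := by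
  intro k
  induction k with
  | zero =>
    intro ℓ ω
    rw [hbd2, Finset.Icc_eq_empty (by norm_num), Finset.sum_empty]
  | succ k ih =>
    intro ℓ
    induction ℓ with
    | zero =>
      intro ω
      rw [hbd1]
      rw [Finset.sum_congr rfl (fun i _ => by
        rw [Finset.Icc_eq_empty (by norm_num : ¬ (1:ℕ) ≤ 0), Finset.sum_empty, mul_zero])]
      simp
    | succ ℓ ihl =>
      intro ω
      rw [hrec (k+1) (ℓ+1) (Nat.le_add_left 1 k) (Nat.le_add_left 1 ℓ) ω]
      simp only [Nat.add_sub_cancel]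
      rw [ih (ℓ+1) ω, ihl ω, ih ℓ ω]
      have hE : ∀ x : ℕ, (∑ j ∈ Finset.Icc 1 (ℓ+1), β ^ (ℓ + 1 - j) * ε x j ω)
          = β * (∑ j ∈ Finset.Icc 1 ℓ, β ^ (ℓ - j) * ε x j ω) + ε x (ℓ+1) ω :=
        fun x => split_shift β ℓ (fun j => ε x j ω)
      have h4 : (∑ i ∈ Finset.Icc 1 (k+1), α ^ (k + 1 - i) *
            ∑ j ∈ Finset.Icc 1 (ℓ+1), β ^ (ℓ + 1 - j) * ε i j ω)
          = α * (∑ i ∈ Finset.Icc 1 k, α ^ (k - i) *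
              ∑ j ∈ Finset.Icc 1 (ℓ+1), β ^ (ℓ + 1 - j) * ε i j ω)
            + ∑ j ∈ Finset.Icc 1 (ℓ+1), β ^ (ℓ + 1 - j) * ε (k+1) j ω :=
        split_shift α k _
      have h2 : (∑ i ∈ Finset.Icc 1 (k+1), α ^ (k + 1 - i) *
            ∑ j ∈ Finset.Icc 1 ℓ, β ^ (ℓ - j) * ε i j ω)
          = α * (∑ i ∈ Finset.Icc 1 k, α ^ (k - i) *
              ∑ j ∈ Finset.Icc 1 ℓ, β ^ (ℓ - j) * ε i j ω)
            + ∑ j ∈ Finset.Icc 1 ℓ, β ^ (ℓ - j) * ε (k+1) j ω :=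
        split_shift α k _
      have h1 : (∑ i ∈ Finset.Icc 1 k, α ^ (k - i) *
            ∑ j ∈ Finset.Icc 1 (ℓ+1), β ^ (ℓ + 1 - j) * ε i j ω)
          = β * (∑ i ∈ Finset.Icc 1 k, α ^ (k - i) *
              ∑ j ∈ Finset.Icc 1 ℓ, β ^ (ℓ - j) * ε i j ω)
            + ∑ i ∈ Finset.Icc 1 k, α ^ (k - i) * ε i (ℓ+1) ω := by
        rw [Finset.mul_sum, ← Finset.sum_add_distrib]
        refine Finset.sum_congr rfl fun i _ => ?_
        rw [hE i]; ring
      rw [h4, h2, h1, hE (k+1)]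
      ring

theorem cov_eq_vertex
    {Ω : Type*} [MeasurableSpace Ω] (P : Measure Ω) [IsProbabilityMeasure P]
    (ε : ℕ → ℕ → Ω → ℝ)
    (hmeas : ∀ k ℓ : ℕ, Measurable (ε k ℓ))
    (hindep : iIndepFun
      (fun p : {p : ℕ × ℕ // 1 ≤ p.1 ∧ 1 ≤ p.2} => ε p.1.1 p.1.2) P)
    (hmean : ∀ k ℓ : ℕ, 1 ≤ k → 1 ≤ ℓ → ∫ ω, ε k ℓ ω ∂P = 0)
    (hvar : ∀ k ℓ : ℕ, 1 ≤ k → 1 ≤ ℓ → variance (ε k ℓ) P = 1)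
    (α β γ : ℝ)
    (X : ℕ → ℕ → Ω → ℝ)
    (hrec : ∀ k ℓ : ℕ, 1 ≤ k → 1 ≤ ℓ → ∀ ω : Ω,
      X k ℓ ω = α * X (k - 1) ℓ ω + β * X k (ℓ - 1) ω + γ * X (k - 1) (ℓ - 1) ω + ε k ℓ ω)
    (hbd1 : ∀ k : ℕ, ∀ ω : Ω, X k 0 ω = 0)
    (hbd2 : ∀ ℓ : ℕ, ∀ ω : Ω, X 0 ℓ ω = 0)
    (hsign : α * β * γ = -1) (hα : |α| = 1) (hβ : |β| = 1) (hγ : |γ| = 1) :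
    ∀ k₁ ℓ₁ k₂ ℓ₂ : ℕ, 1 ≤ k₁ → 1 ≤ ℓ₁ → 1 ≤ k₂ → 1 ≤ ℓ₂ →
      cov P (X k₁ ℓ₁) (X k₂ ℓ₂) =
        ((min k₁ k₂ : ℕ) : ℝ) * ((min ℓ₁ ℓ₂ : ℕ) : ℝ) *
          α ^ ((k₁ : ℤ) - k₂).natAbs * β ^ ((ℓ₁ : ℤ) - ℓ₂).natAbs := by
  have hα2 : α ^ 2 = 1 := by rw [← sq_abs, hα]; norm_num
  have hβ2 : β ^ 2 = 1 := by rw [← sq_abs, hβ]; norm_num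
  have hγeq : γ = -(α * β) := by
    linear_combination α * β * hsign - γ * β ^ 2 * hα2 - γ * hβ2
  have hrec' : ∀ k ℓ : ℕ, 1 ≤ k → 1 ≤ ℓ → ∀ ω : Ω, X k ℓ ω =
      α * X (k - 1) ℓ ω + β * X k (ℓ - 1) ω + (-(α * β)) * X (k - 1) (ℓ - 1) ω + ε k ℓ ω := by
    intro k ℓ hk hℓ ω
    rw [hrec k ℓ hk hℓ ω, hγeq]
  have hXf : ∀ k ℓ : ℕ, ∀ ω : Ω, X k ℓ ω =
      ∑ p ∈ Finset.Icc 1 k ×ˢ Finset.Icc 1 ℓ,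
        α ^ (k - p.1) * β ^ (ℓ - p.2) * ε p.1 p.2 ω := by
    intro k ℓ ω
    rw [X_formula α β ε X hrec' hbd1 hbd2 k ℓ ω, Finset.sum_product]
    simp only [Finset.mul_sum, mul_assoc]
  -- L² membership
  have hL2 : ∀ k ℓ : ℕ, 1 ≤ k → 1 ≤ ℓ → MemLp (ε k ℓ) 2 P := by
    intro k ℓ hk hℓ
    by_contra h
    have h1 : evariance (ε k ℓ) P = ⊤ :=
      evariance_eq_top (hmeas k ℓ).aestronglyMeasurable h
    have h2 := hvar k ℓ hk hℓ
    have h3 : variance (ε k ℓ) P = (evariance (ε k ℓ) P).toReal := rfl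
    rw [h3, h1] at h2
    simp at h2
  have hInt : ∀ k ℓ : ℕ, 1 ≤ k → 1 ≤ ℓ → Integrable (ε k ℓ) P :=
    fun k ℓ hk hℓ => (hL2 k ℓ hk hℓ).integrable one_le_two
  -- second moments
  have hsq : ∀ k ℓ : ℕ, 1 ≤ k → 1 ≤ ℓ → ∫ ω, ε k ℓ ω * ε k ℓ ω ∂P = 1 := by
    intro k ℓ hk hℓ
    have h := variance_eq_sub (hL2 k ℓ hk hℓ)
    rw [hvar k ℓ hk hℓ, hmean k ℓ hk hℓ] at h
    have h2 : ∫ ω, ε k ℓ ω * ε k ℓ ω ∂P = ∫ ω, (ε k ℓ ^ 2) ω ∂P := by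
      congr 1; funext ω; simp [pow_two]
    rw [h2]
    simp only [ne_eq, OfNat.ofNat_ne_zero, not_false_eq_true, zero_pow, sub_zero] at h
    linarith
  -- cross moments
  have hcross : ∀ a b c d : ℕ, 1 ≤ a → 1 ≤ b → 1 ≤ c → 1 ≤ d → (a, b) ≠ (c, d) →
      ∫ ω, ε a b ω * ε c d ω ∂P = 0 := by
    intro a b c d ha hb hc hd hne
    have hne' : (⟨(a, b), ⟨ha, hb⟩⟩ : {p : ℕ × ℕ // 1 ≤ p.1 ∧ 1 ≤ p.2})
        ≠ ⟨(c, d), ⟨hc, hd⟩⟩ := by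
      simp only [ne_eq, Subtype.mk_eq_mk]; exact hne
    have hind : IndepFun (ε a b) (ε c d) P := hindep.indepFun hne'
    have h : ∫ ω, ε a b ω * ε c d ω ∂P = _ := hind.integral_mul_eq_mul_integral (hmeas a b).aestronglyMeasurable
      (hmeas c d).aestronglyMeasurable
    rw [h, hmean a b ha hb, zero_mul]
  -- integrability of products
  have hmul : ∀ a b c d : ℕ, 1 ≤ a → 1 ≤ b → 1 ≤ c → 1 ≤ d →
      Integrable (fun ω => ε a b ω * ε c d ω) P := by
    intro a b c d ha hb hc hd
    have h : MemLp (ε a b • ε c d) 1 P :=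
      (hL2 c d hc hd).smul (hL2 a b ha hb)
    rw [memLp_one_iff_integrable] at h
    exact h
  -- mean of X is zero
  have hmX : ∀ k ℓ : ℕ, ∫ ω, X k ℓ ω ∂P = 0 := by
    intro k ℓ
    have h1 : ∫ ω, X k ℓ ω ∂P = ∫ ω, ∑ p ∈ Finset.Icc 1 k ×ˢ Finset.Icc 1 ℓ,
        α ^ (k - p.1) * β ^ (ℓ - p.2) * ε p.1 p.2 ω ∂P := by
      congr 1; funext ω; exact hXf k ℓ ω
    rw [h1, integral_finset_sum]
    · refine Finset.sum_eq_zero fun p hp => ?_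
      simp only [Finset.mem_product, Finset.mem_Icc] at hp
      rw [integral_const_mul, hmean p.1 p.2 hp.1.1 hp.2.1, mul_zero]
    · intro p hp
      simp only [Finset.mem_product, Finset.mem_Icc] at hp
      exact (hInt p.1 p.2 hp.1.1 hp.2.1).const_mul _
  intro k₁ ℓ₁ k₂ ℓ₂ hk₁ hℓ₁ hk₂ hℓ₂
  unfold cov
  rw [hmX k₁ ℓ₁, hmX k₂ ℓ₂]
  simp only [sub_zero]
  have hAA : (Finset.Icc 1 k₁ ×ˢ Finset.Icc 1 ℓ₁) ∩ (Finset.Icc 1 k₂ ×ˢ Finset.Icc 1 ℓ₂)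
      = Finset.Icc 1 (min k₁ k₂) ×ˢ Finset.Icc 1 (min ℓ₁ ℓ₂) := by
    ext p
    simp only [Finset.mem_inter, Finset.mem_product, Finset.mem_Icc]
    omega
  calc ∫ ω, X k₁ ℓ₁ ω * X k₂ ℓ₂ ω ∂P
      = ∫ ω, ∑ p ∈ Finset.Icc 1 k₁ ×ˢ Finset.Icc 1 ℓ₁,
          ∑ q ∈ Finset.Icc 1 k₂ ×ˢ Finset.Icc 1 ℓ₂,
            (α ^ (k₁ - p.1) * β ^ (ℓ₁ - p.2) * (α ^ (k₂ - q.1) * β ^ (ℓ₂ - q.2))) *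
              (ε p.1 p.2 ω * ε q.1 q.2 ω) ∂P := by
        congr 1; funext ω
        rw [hXf k₁ ℓ₁ ω, hXf k₂ ℓ₂ ω, Finset.sum_mul_sum]
        exact Finset.sum_congr rfl fun p _ => Finset.sum_congr rfl fun q _ => by ring
    _ = ∑ p ∈ Finset.Icc 1 k₁ ×ˢ Finset.Icc 1 ℓ₁,
          ∑ q ∈ Finset.Icc 1 k₂ ×ˢ Finset.Icc 1 ℓ₂,
            (α ^ (k₁ - p.1) * β ^ (ℓ₁ - p.2) * (α ^ (k₂ - q.1) * β ^ (ℓ₂ - q.2))) *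
              ∫ ω, ε p.1 p.2 ω * ε q.1 q.2 ω ∂P := by
        rw [integral_finset_sum]
        · refine Finset.sum_congr rfl fun p hp => ?_
          simp only [Finset.mem_product, Finset.mem_Icc] at hp
          rw [integral_finset_sum]
          · exact Finset.sum_congr rfl fun q hq => integral_const_mul _ _
          · intro q hq
            simp only [Finset.mem_product, Finset.mem_Icc] at hq
            exact (hmul p.1 p.2 q.1 q.2 hp.1.1 hp.2.1 hq.1.1 hq.2.1).const_mul _
        · intro p hp
          simp only [Finset.mem_product, Finset.mem_Icc] at hp
          refine integrable_finset_sum _ fun q hq => ?_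
          simp only [Finset.mem_product, Finset.mem_Icc] at hq
          exact (hmul p.1 p.2 q.1 q.2 hp.1.1 hp.2.1 hq.1.1 hq.2.1).const_mul _
    _ = ∑ p ∈ Finset.Icc 1 k₁ ×ˢ Finset.Icc 1 ℓ₁,
          ∑ q ∈ Finset.Icc 1 k₂ ×ˢ Finset.Icc 1 ℓ₂,
            (α ^ (k₁ - p.1) * β ^ (ℓ₁ - p.2) * (α ^ (k₂ - q.1) * β ^ (ℓ₂ - q.2))) *
              (if p = q then (1:ℝ) else 0) := by
        refine Finset.sum_congr rfl fun p hp => Finset.sum_congr rfl fun q hq => ?_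
        simp only [Finset.mem_product, Finset.mem_Icc] at hp hq
        by_cases hpq : p = q
        · subst hpq
          rw [if_pos rfl, hsq p.1 p.2 hp.1.1 hp.2.1]
        · rw [if_neg hpq, hcross p.1 p.2 q.1 q.2 hp.1.1 hp.2.1 hq.1.1 hq.2.1
            (by simpa using hpq)]
    _ = ∑ p ∈ Finset.Icc 1 (min k₁ k₂) ×ˢ Finset.Icc 1 (min ℓ₁ ℓ₂),
          α ^ (k₁ - p.1) * β ^ (ℓ₁ - p.2) * (α ^ (k₂ - p.1) * β ^ (ℓ₂ - p.2)) := by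
        simp only [mul_ite, mul_one, mul_zero, Finset.sum_ite_eq, Finset.sum_ite_mem]
        rw [hAA]
    _ = ∑ _p ∈ Finset.Icc 1 (min k₁ k₂) ×ˢ Finset.Icc 1 (min ℓ₁ ℓ₂),
          (α ^ ((k₁ : ℤ) - k₂).natAbs * β ^ ((ℓ₁ : ℤ) - ℓ₂).natAbs) := by
        refine Finset.sum_congr rfl fun p hp => ?_
        simp only [Finset.mem_product, Finset.mem_Icc] at hp
        have e1 : α ^ (k₁ - p.1) * α ^ (k₂ - p.1) = α ^ ((k₁ : ℤ) - k₂).natAbs := by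
          rw [← pow_add]
          have h : (k₁ - p.1) + (k₂ - p.1) = 2 * (min k₁ k₂ - p.1) + ((k₁ : ℤ) - k₂).natAbs := by
            omega
          rw [h, pow_add, pow_mul, hα2, one_pow, one_mul]
        have e2 : β ^ (ℓ₁ - p.2) * β ^ (ℓ₂ - p.2) = β ^ ((ℓ₁ : ℤ) - ℓ₂).natAbs := by
          rw [← pow_add]
          have h : (ℓ₁ - p.2) + (ℓ₂ - p.2) = 2 * (min ℓ₁ ℓ₂ - p.2) + ((ℓ₁ : ℤ) - ℓ₂).natAbs := by
            omega
          rw [h, pow_add, pow_mul, hβ2, one_pow, one_mul]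
        calc α ^ (k₁ - p.1) * β ^ (ℓ₁ - p.2) * (α ^ (k₂ - p.1) * β ^ (ℓ₂ - p.2))
            = (α ^ (k₁ - p.1) * α ^ (k₂ - p.1)) * (β ^ (ℓ₁ - p.2) * β ^ (ℓ₂ - p.2)) := by ring
          _ = _ := by rw [e1, e2]
    _ = ((min k₁ k₂ : ℕ) : ℝ) * ((min ℓ₁ ℓ₂ : ℕ) : ℝ) *
          α ^ ((k₁ : ℤ) - k₂).natAbs * β ^ ((ℓ₁ : ℤ) - ℓ₂).natAbs := by
        rw [Finset.sum_const, Finset.card_product, Nat.card_Icc, Nat.card_Icc]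
        simp only [Nat.add_sub_cancel, nsmul_eq_mul, Nat.cast_mul]
        ring
end

section
/- Suppose the real parameters satisfy αβγ ≤ 0, |α| = 1 and |β| = |γ| < 1. Then for all fixed reals s, t > 0: lim_{n→∞} n^{−1} Var(Y^{(n)}(s,t)) = s / (1 − γ²). -/
open MeasureTheory ProbabilityTheory Filter

lemma aux_sum1 (q : ℝ) (g : ℕ → ℝ) (b : ℕ) :
    ∑ j ∈ Finset.Icc 1 (b+1), q^(b+1-j) * g j
      = q * (∑ j ∈ Finset.Icc 1 b, q^(b-j) * g j) + g (b+1) := by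
  rw [Finset.sum_Icc_succ_top (by omega : 1 ≤ b+1), Finset.mul_sum,
    Nat.sub_self, pow_zero, one_mul]
  congr 1
  refine Finset.sum_congr rfl fun j hj => ?_
  rw [Finset.mem_Icc] at hj
  have h : b + 1 - j = (b - j) + 1 := by omega
  rw [h, pow_succ]
  ring

lemma aux_sum2 (α q : ℝ) (f : ℕ → ℕ → ℝ) (a b : ℕ) :
    (∑ i ∈ Finset.Icc 1 (a+1), ∑ j ∈ Finset.Icc 1 b, α^(a+1-i) * q^(b-j) * f i j)
      = α * (∑ i ∈ Finset.Icc 1 a, ∑ j ∈ Finset.Icc 1 b, α^(a-i) * q^(b-j) * f i j)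
        + ∑ j ∈ Finset.Icc 1 b, q^(b-j) * f (a+1) j := by
  rw [Finset.sum_Icc_succ_top (by omega : 1 ≤ a+1), Finset.mul_sum, Nat.sub_self]
  congr 1
  · refine Finset.sum_congr rfl fun i hi => ?_
    rw [Finset.mem_Icc] at hi
    rw [Finset.mul_sum]
    refine Finset.sum_congr rfl fun j hj => ?_
    have h : a + 1 - i = (a - i) + 1 := by omega
    rw [h, pow_succ]
    ring
  · simp

lemma aux_geom (q : ℝ) : ∀ b : ℕ, ∑ j ∈ Finset.Icc 1 b, q^(b-j) = ∑ m ∈ Finset.range b, q^m := by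
  intro b
  induction b with
  | zero => simp
  | succ b ih =>
    have h1 : ∑ j ∈ Finset.Icc 1 (b+1), q^(b+1-j) * (1:ℝ)
        = q * (∑ j ∈ Finset.Icc 1 b, q^(b-j) * 1) + 1 := aux_sum1 q (fun _ => 1) b
    simp only [mul_one] at h1
    rw [h1, ih, geom_sum_succ]

theorem variance_limit_edge_alpha
    {Ω : Type*} [MeasurableSpace Ω] (P : Measure Ω) [IsProbabilityMeasure P]
    (ε : ℕ → ℕ → Ω → ℝ)
    (hmeas : ∀ k ℓ : ℕ, Measurable (ε k ℓ))
    (hindep : iIndepFun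
      (fun p : {p : ℕ × ℕ // 1 ≤ p.1 ∧ 1 ≤ p.2} => ε p.1.1 p.1.2) P)
    (hmean : ∀ k ℓ : ℕ, 1 ≤ k → 1 ≤ ℓ → ∫ ω, ε k ℓ ω ∂P = 0)
    (hvar : ∀ k ℓ : ℕ, 1 ≤ k → 1 ≤ ℓ → variance (ε k ℓ) P = 1)
    (α β γ : ℝ)
    (X : ℕ → ℕ → Ω → ℝ)
    (hrec : ∀ k ℓ : ℕ, 1 ≤ k → 1 ≤ ℓ → ∀ ω : Ω,
      X k ℓ ω = α * X (k - 1) ℓ ω + β * X k (ℓ - 1) ω + γ * X (k - 1) (ℓ - 1) ω + ε k ℓ ω)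
    (hbd1 : ∀ k : ℕ, ∀ ω : Ω, X k 0 ω = 0)
    (hbd2 : ∀ ℓ : ℕ, ∀ ω : Ω, X 0 ℓ ω = 0)
    (hsign : α * β * γ ≤ 0) (hα : |α| = 1) (hβγ : |β| = |γ|) (hγ : |γ| < 1) :
    ∀ s t : ℝ, 0 < s → 0 < t →
      Tendsto (fun n : ℕ => ((n : ℝ))⁻¹ * variance (X ⌊(n : ℝ) * s⌋₊ ⌊(n : ℝ) * t⌋₊) P)
        atTop (nhds (s / (1 - γ ^ 2))) := by
  -- basic parameter facts
  have hα2 : α ^ 2 = 1 := by rw [← sq_abs, hα, one_pow]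
  have hβ2 : β ^ 2 = γ ^ 2 := by rw [← sq_abs, ← sq_abs γ, hβγ]
  have hγ2 : γ ^ 2 < 1 := by
    rw [← sq_abs]
    nlinarith [abs_nonneg γ]
  have hγfac : γ = -(α * β) := by
    rcases (abs_eq (le_of_lt one_pos)).mp hα with hA | hA <;>
      rcases abs_eq_abs.mp hβγ with hB | hB <;> subst hA <;> nlinarith [sq_nonneg γ]
  -- explicit formula for X
  have hX : ∀ k ℓ : ℕ, ∀ ω : Ω,
      X k ℓ ω = ∑ i ∈ Finset.Icc 1 k, ∑ j ∈ Finset.Icc 1 ℓ,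
        α ^ (k - i) * β ^ (ℓ - j) * ε i j ω := by
    intro k
    induction k with
    | zero => intro ℓ ω; simp [hbd2]
    | succ k ihk =>
      intro ℓ
      induction ℓ with
      | zero => intro ω; simp [hbd1]
      | succ ℓ ihℓ =>
        intro ω
        rw [hrec (k+1) (ℓ+1) (by omega) (by omega) ω]
        simp only [Nat.add_sub_cancel]
        rw [ihk (ℓ+1) ω, ihk ℓ ω, ihℓ ω, hγfac,
          aux_sum2 α β (fun i j => ε i j ω) k (ℓ+1),
          aux_sum2 α β (fun i j => ε i j ω) k ℓ,
          aux_sum1 β (fun j => ε (k+1) j ω) ℓ]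
        ring
  -- Memℒp of the noise
  have hmem : ∀ k ℓ : ℕ, 1 ≤ k → 1 ≤ ℓ → MemLp (ε k ℓ) 2 P := by
    intro k ℓ hk hℓ
    have hv := hvar k ℓ hk hℓ
    have hne : evariance (ε k ℓ) P ≠ ⊤ := by
      intro h
      rw [variance, h] at hv; simp at hv
    exact (evariance_lt_top_iff_memLp (hmeas k ℓ).aestronglyMeasurable).mp
      (lt_top_iff_ne_top.mpr hne)
  -- variance formula
  have hVar : ∀ k ℓ : ℕ,
      variance (X k ℓ) P = (k : ℝ) * ∑ m ∈ Finset.range ℓ, (γ ^ 2) ^ m := by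
    intro k ℓ
    classical
    set S : Finset (ℕ × ℕ) := Finset.Icc 1 k ×ˢ Finset.Icc 1 ℓ with hS
    set pr : ℕ × ℕ → Prop := fun p => 1 ≤ p.1 ∧ 1 ≤ p.2 with hpr
    have hSmem : ∀ p ∈ S, pr p := by
      intro p hp
      rw [hS, Finset.mem_product, Finset.mem_Icc, Finset.mem_Icc] at hp
      exact ⟨hp.1.1, hp.2.1⟩
    set c : ℕ × ℕ → ℝ := fun p => α ^ (k - p.1) * β ^ (ℓ - p.2) with hc
    set Y : {p : ℕ × ℕ // pr p} → Ω → ℝ := fun p ω => c p.1 * ε p.1.1 p.1.2 ω with hY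
    have hXsum : X k ℓ = ∑ p ∈ S.subtype pr, Y p := by
      funext ω
      rw [hX k ℓ ω, Finset.sum_apply]
      rw [Finset.sum_subtype_of_mem (fun p : ℕ × ℕ => c p * ε p.1 p.2 ω) hSmem]
      rw [hS, Finset.sum_product]
    have hvsum : variance (∑ p ∈ S.subtype pr, Y p) P
        = ∑ p ∈ S.subtype pr, variance (Y p) P := by
      apply IndepFun.variance_sum
      · intro p _
        exact (hmem p.1.1 p.1.2 p.2.1 p.2.2).const_mul _
      · intro p _ q _ hpq
        have h0 : IndepFun (ε p.1.1 p.1.2) (ε q.1.1 q.1.2) P := hindep.indepFun hpq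
        have h1 := h0.comp (φ := fun x : ℝ => c p.1 * x) (ψ := fun x : ℝ => c q.1 * x)
          (measurable_id.const_mul _) (measurable_id.const_mul _)
        exact h1
    have hvY : ∀ p : {p : ℕ × ℕ // pr p}, variance (Y p) P = c p.1 ^ 2 := by
      intro p
      rw [hY]
      have := variance_const_mul (c p.1) (ε p.1.1 p.1.2) P
      rw [this, hvar p.1.1 p.1.2 p.2.1 p.2.2, mul_one]
    rw [hXsum, hvsum]
    have : ∑ p ∈ S.subtype pr, variance (Y p) P = ∑ p ∈ S, c p ^ 2 := by
      rw [← Finset.sum_subtype_of_mem (fun p : ℕ × ℕ => c p ^ 2) hSmem]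
      exact Finset.sum_congr rfl fun p _ => hvY p
    rw [this, hS, Finset.sum_product]
    have hcc : ∀ i ∈ Finset.Icc 1 k, ∀ j ∈ Finset.Icc 1 ℓ,
        c (i, j) ^ 2 = (γ ^ 2) ^ (ℓ - j) := by
      intro i _ j _
      rw [hc]
      simp only
      rw [mul_pow, ← pow_mul, ← pow_mul, mul_comm (k - i) 2, mul_comm (ℓ - j) 2,
        pow_mul, pow_mul, hα2, hβ2, one_pow, one_mul]
    calc (∑ i ∈ Finset.Icc 1 k, ∑ j ∈ Finset.Icc 1 ℓ, c (i, j) ^ 2)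
        = ∑ i ∈ Finset.Icc 1 k, ∑ j ∈ Finset.Icc 1 ℓ, (γ ^ 2) ^ (ℓ - j) :=
          Finset.sum_congr rfl fun i hi => Finset.sum_congr rfl fun j hj => hcc i hi j hj
      _ = (k : ℝ) * ∑ m ∈ Finset.range ℓ, (γ ^ 2) ^ m := by
          rw [Finset.sum_const, aux_geom, Nat.card_Icc]
          simp [nsmul_eq_mul]
  -- the limit
  intro s t hs ht
  have hq0 : (0:ℝ) ≤ γ ^ 2 := sq_nonneg γ
  have h1 : Tendsto (fun n : ℕ => (⌊(n : ℝ) * s⌋₊ : ℝ) / n) atTop (nhds s) := by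
    have := (tendsto_nat_floor_mul_div_atTop (le_of_lt hs)).comp
      (tendsto_natCast_atTop_atTop (R := ℝ))
    simpa [Function.comp_def, mul_comm] using this
  have h2 : Tendsto (fun n : ℕ => ∑ m ∈ Finset.range ⌊(n : ℝ) * t⌋₊, (γ ^ 2) ^ m)
      atTop (nhds ((1 - γ ^ 2)⁻¹)) := by
    have hgeo := (hasSum_geometric_of_lt_one hq0 hγ2).tendsto_sum_nat
    have hfl : Tendsto (fun n : ℕ => ⌊(n : ℝ) * t⌋₊) atTop atTop := by
      have := tendsto_nat_floor_mul_atTop (α := ℝ) t ht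
      simpa [mul_comm] using this
    exact hgeo.comp hfl
  have hmain := h1.mul h2
  rw [show s * (1 - γ ^ 2)⁻¹ = s / (1 - γ ^ 2) from (div_eq_mul_inv _ _).symm] at hmain
  refine hmain.congr fun n => ?_
  rw [hVar]
  ring
end

section
/- Suppose the real parameters satisfy αβγ ≤ 0, |β| = 1 and |α| = |γ| < 1. Then for all fixed reals s, t > 0: lim_{n→∞} n^{−1} Var(Y^{(n)}(s,t)) = t / (1 − γ²). -/
open MeasureTheory ProbabilityTheory Filter

theorem variance_limit_edge_beta
    {Ω : Type*} [MeasurableSpace Ω] (P : Measure Ω) [IsProbabilityMeasure P]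
    (ε : ℕ → ℕ → Ω → ℝ)
    (hmeas : ∀ k ℓ : ℕ, Measurable (ε k ℓ))
    (hindep : iIndepFun
      (fun p : {p : ℕ × ℕ // 1 ≤ p.1 ∧ 1 ≤ p.2} => ε p.1.1 p.1.2) P)
    (hmean : ∀ k ℓ : ℕ, 1 ≤ k → 1 ≤ ℓ → ∫ ω, ε k ℓ ω ∂P = 0)
    (hvar : ∀ k ℓ : ℕ, 1 ≤ k → 1 ≤ ℓ → variance (ε k ℓ) P = 1)
    (α β γ : ℝ)
    (X : ℕ → ℕ → Ω → ℝ)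
    (hrec : ∀ k ℓ : ℕ, 1 ≤ k → 1 ≤ ℓ → ∀ ω : Ω,
      X k ℓ ω = α * X (k - 1) ℓ ω + β * X k (ℓ - 1) ω + γ * X (k - 1) (ℓ - 1) ω + ε k ℓ ω)
    (hbd1 : ∀ k : ℕ, ∀ ω : Ω, X k 0 ω = 0)
    (hbd2 : ∀ ℓ : ℕ, ∀ ω : Ω, X 0 ℓ ω = 0)
    (hsign : α * β * γ ≤ 0) (hβ : |β| = 1) (hαγ : |α| = |γ|) (hγ : |γ| < 1) :
    ∀ s t : ℝ, 0 < s → 0 < t →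
      Tendsto (fun n : ℕ => ((n : ℝ))⁻¹ * variance (X ⌊(n : ℝ) * s⌋₊ ⌊(n : ℝ) * t⌋₊) P)
        atTop (nhds (t / (1 - γ ^ 2))) := by
  classical
  -- Basic algebraic consequences of the hypotheses
  have hβ2 : β ^ 2 = 1 := by
    have h := sq_abs β
    rw [hβ] at h; nlinarith
  have hα2 : α ^ 2 = γ ^ 2 := by
    have h1 := sq_abs α; have h2 := sq_abs γ
    rw [hαγ] at h1; nlinarith
  have hγαβ : γ = -(α * β) := by
    have hfac : (γ * β - α) * (γ * β + α) = 0 := by nlinarith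
    rcases mul_eq_zero.1 hfac with h | h
    · -- γ * β = α, then α * β * γ = γ² ≤ 0, so γ = 0 and α = 0
      have hγ0 : γ = 0 := by nlinarith
      have hα0 : α = 0 := by nlinarith
      rw [hγ0, hα0]; ring
    · -- γ * β = -α
      have : γ * β ^ 2 = -α * β := by nlinarith
      rw [hβ2] at this; linarith
  -- Moving-average representation
  set T : ℕ → ℕ → Ω → ℝ :=
    fun k ℓ ω => ∑ j ∈ Finset.range ℓ, β ^ j * ε k (ℓ - j) ω with hT
  have hTrec : ∀ k ℓ : ℕ, ∀ ω : Ω, T k (ℓ + 1) ω = β * T k ℓ ω + ε k (ℓ + 1) ω := by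
    intro k ℓ ω
    simp only [hT]
    rw [Finset.sum_range_succ']
    simp only [Nat.succ_sub_succ, pow_zero, Nat.sub_zero, one_mul]
    rw [Finset.mul_sum]
    congr 1
    refine Finset.sum_congr rfl fun i _ => ?_
    ring
  have hU : ∀ k ℓ : ℕ, ∀ ω : Ω, X (k + 1) ℓ ω = α * X k ℓ ω + T (k + 1) ℓ ω := by
    intro k ℓ
    induction ℓ with
    | zero => intro ω; simp [hbd1, hT]
    | succ ℓ IH =>
      intro ω
      have h := hrec (k + 1) (ℓ + 1) (Nat.le_add_left 1 k) (Nat.le_add_left 1 ℓ) ω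
      simp only [Nat.add_sub_cancel] at h
      rw [h, hTrec, IH, hγαβ]
      ring
  have hX : ∀ k ℓ : ℕ, ∀ ω : Ω,
      X k ℓ ω = ∑ i ∈ Finset.range k, α ^ i * T (k - i) ℓ ω := by
    intro k
    induction k with
    | zero => intro ℓ ω; simp [hbd2]
    | succ k IH =>
      intro ℓ ω
      rw [hU k ℓ ω, IH]
      rw [Finset.sum_range_succ']
      simp only [Nat.succ_sub_succ, pow_zero, Nat.sub_zero, one_mul]
      rw [Finset.mul_sum]
      congr 1
      refine Finset.sum_congr rfl fun i _ => ?_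
      ring
  -- The noise terms are in L²
  have hL2 : ∀ a b : ℕ, 1 ≤ a → 1 ≤ b → MemLp (ε a b) 2 P := by
    intro a b ha hb
    refine (evariance_lt_top_iff_memLp (hmeas a b).aestronglyMeasurable).1 ?_
    by_contra h
    rw [not_lt, top_le_iff] at h
    have := hvar a b ha hb
    rw [ProbabilityTheory.variance, h, ENNReal.toReal_top] at this
    norm_num at this
  -- Exact variance formula
  have hvarX : ∀ k ℓ : ℕ,
      variance (X k ℓ) P = (ℓ : ℝ) * ∑ i ∈ Finset.range k, (γ ^ 2) ^ i := by
    intro k ℓ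
    set s : Finset (ℕ × ℕ) := Finset.range k ×ˢ Finset.range ℓ with hs
    set f : ℕ × ℕ → Ω → ℝ :=
      fun p ω => (α ^ p.1 * β ^ p.2) * ε (k - p.1) (ℓ - p.2) ω with hf
    have hXf : X k ℓ = ∑ p ∈ s, f p := by
      funext ω
      rw [Finset.sum_apply, hX k ℓ ω, hs, Finset.sum_product]
      refine Finset.sum_congr rfl fun i _ => ?_
      rw [hT, Finset.mul_sum]
      refine Finset.sum_congr rfl fun j _ => ?_
      rw [hf]; ring
    have hmem : ∀ p ∈ s, MemLp (f p) 2 P := by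
      intro p hp
      rw [hs, Finset.mem_product, Finset.mem_range, Finset.mem_range] at hp
      exact (hL2 (k - p.1) (ℓ - p.2) (by omega) (by omega)).const_mul _
    have hpair : Set.Pairwise ↑s fun p q => IndepFun (f p) (f q) P := by
      intro p hp q hq hpq
      simp only [Finset.coe_product, Set.mem_prod, Finset.mem_coe, Finset.mem_range,
        hs, Finset.mem_coe, Finset.mem_product] at hp hq
      have hip : 1 ≤ k - p.1 ∧ 1 ≤ ℓ - p.2 := ⟨by omega, by omega⟩
      have hiq : 1 ≤ k - q.1 ∧ 1 ≤ ℓ - q.2 := ⟨by omega, by omega⟩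
      have hne : (⟨(k - p.1, ℓ - p.2), hip⟩ : {p : ℕ × ℕ // 1 ≤ p.1 ∧ 1 ≤ p.2}) ≠
          ⟨(k - q.1, ℓ - q.2), hiq⟩ := by
        intro hcontra
        apply hpq
        have h1 := congrArg (fun x => x.1.1) hcontra
        have h2 := congrArg (fun x => x.1.2) hcontra
        simp only at h1 h2
        have : p.1 = q.1 := by omega
        have : p.2 = q.2 := by omega
        exact Prod.ext (by omega) (by omega)
      have hbase := hindep.indepFun hne
      exact hbase.comp (measurable_const_mul (α ^ p.1 * β ^ p.2))
        (measurable_const_mul (α ^ q.1 * β ^ q.2))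
    rw [hXf, IndepFun.variance_sum hmem hpair]
    have hterm : ∀ p ∈ s, variance (f p) P = (γ ^ 2) ^ p.1 := by
      intro p hp
      rw [hs, Finset.mem_product, Finset.mem_range, Finset.mem_range] at hp
      rw [hf]
      rw [variance_const_mul, hvar (k - p.1) (ℓ - p.2) (by omega) (by omega)]
      rw [mul_pow, ← pow_mul, ← pow_mul, mul_comm p.1 2, mul_comm p.2 2, pow_mul, pow_mul,
        hα2, hβ2, one_pow, mul_one, mul_one]
    rw [Finset.sum_congr rfl hterm, hs, Finset.sum_product]
    simp only [Finset.sum_const, Finset.card_range, nsmul_eq_mul]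
    rw [← Finset.mul_sum]
  -- The limit
  intro s t hs ht
  have hγ2 : γ ^ 2 < 1 := by
    have h := sq_abs γ
    nlinarith [abs_nonneg γ]
  have key : ∀ n : ℕ, ((n : ℝ))⁻¹ * variance (X ⌊(n : ℝ) * s⌋₊ ⌊(n : ℝ) * t⌋₊) P =
      ((⌊(n : ℝ) * t⌋₊ : ℝ) / n) * ∑ i ∈ Finset.range ⌊(n : ℝ) * s⌋₊, (γ ^ 2) ^ i := by
    intro n
    rw [hvarX, div_eq_mul_inv]
    ring
  have h1 : Tendsto (fun n : ℕ => (⌊(n : ℝ) * t⌋₊ : ℝ) / n) atTop (nhds t) := by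
    have := (tendsto_nat_floor_mul_div_atTop (le_of_lt ht)).comp
      tendsto_natCast_atTop_atTop (α := ℕ)
    simpa [Function.comp_def, mul_comm] using this
  have h2 : Tendsto (fun n : ℕ => ∑ i ∈ Finset.range ⌊(n : ℝ) * s⌋₊, (γ ^ 2) ^ i)
      atTop (nhds (1 - γ ^ 2)⁻¹) := by
    have hgeo := (hasSum_geometric_of_lt_one (sq_nonneg γ) hγ2).tendsto_sum_nat
    have hfloor : Tendsto (fun n : ℕ => ⌊(n : ℝ) * s⌋₊) atTop atTop := by
      have := tendsto_nat_floor_mul_atTop s hs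
      simpa [mul_comm] using this
    exact hgeo.comp hfloor
  have := h1.mul h2
  rw [div_eq_mul_inv]
  refine Tendsto.congr (fun n => (key n).symm) this
end

section
/- Suppose the real parameters satisfy αβγ = −1 and |α| = |β| = |γ| = 1. Then for all fixed reals s, t > 0: lim_{n→∞} n^{−2} Var(Y^{(n)}(s,t)) = s·t. -/
open MeasureTheory ProbabilityTheory Filter

theorem variance_limit_vertex
    {Ω : Type*} [MeasurableSpace Ω] (P : Measure Ω) [IsProbabilityMeasure P]
    (ε : ℕ → ℕ → Ω → ℝ)
    (hmeas : ∀ k ℓ : ℕ, Measurable (ε k ℓ))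
    (hindep : iIndepFun
      (fun p : {p : ℕ × ℕ // 1 ≤ p.1 ∧ 1 ≤ p.2} => ε p.1.1 p.1.2) P)
    (hmean : ∀ k ℓ : ℕ, 1 ≤ k → 1 ≤ ℓ → ∫ ω, ε k ℓ ω ∂P = 0)
    (hvar : ∀ k ℓ : ℕ, 1 ≤ k → 1 ≤ ℓ → variance (ε k ℓ) P = 1)
    (α β γ : ℝ)
    (X : ℕ → ℕ → Ω → ℝ)
    (hrec : ∀ k ℓ : ℕ, 1 ≤ k → 1 ≤ ℓ → ∀ ω : Ω,
      X k ℓ ω = α * X (k - 1) ℓ ω + β * X k (ℓ - 1) ω + γ * X (k - 1) (ℓ - 1) ω + ε k ℓ ω)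
    (hbd1 : ∀ k : ℕ, ∀ ω : Ω, X k 0 ω = 0)
    (hbd2 : ∀ ℓ : ℕ, ∀ ω : Ω, X 0 ℓ ω = 0)
    (hsign : α * β * γ = -1) (hα : |α| = 1) (hβ : |β| = 1) (hγ : |γ| = 1) :
    ∀ s t : ℝ, 0 < s → 0 < t →
      Tendsto (fun n : ℕ => (((n : ℝ)) ^ 2)⁻¹ * variance (X ⌊(n : ℝ) * s⌋₊ ⌊(n : ℝ) * t⌋₊) P)
        atTop (nhds (s * t)) := by
  classical
  have hα2 : α ^ 2 = 1 := by
    rcases (abs_eq (le_of_lt one_pos)).mp hα with h | h <;> rw [h] <;> ring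
  have hβ2 : β ^ 2 = 1 := by
    rcases (abs_eq (le_of_lt one_pos)).mp hβ with h | h <;> rw [h] <;> ring
  have hγeq : γ = -(α * β) := by
    linear_combination (α*β)*hsign + (-γ)*hα2 + (-γ*α^2)*hβ2
  have hpow1 : ∀ (x : ℝ), x ^ 2 = 1 → ∀ m : ℕ, x ^ m * x ^ m = 1 := by
    intro x hx m
    rw [← pow_add, ← two_mul, pow_mul, hx, one_pow]
  -- representation
  have key : ∀ k ℓ : ℕ, ∀ ω : Ω, X k ℓ ω =
      α ^ k * β ^ ℓ * ∑ i ∈ Finset.Icc 1 k, ∑ j ∈ Finset.Icc 1 ℓ, α ^ i * β ^ j * ε i j ω := by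
    intro k
    induction k with
    | zero => intro ℓ ω; simp [hbd2]
    | succ k ihk =>
      intro ℓ
      induction ℓ with
      | zero => intro ω; simp [hbd1]
      | succ ℓ ihℓ =>
        intro ω
        have split : ∀ (m : ℕ) (g : ℕ → ℝ),
            ∑ j ∈ Finset.Icc 1 (m + 1), g j = (∑ j ∈ Finset.Icc 1 m, g j) + g (m + 1) :=
          fun m g => Finset.sum_Icc_succ_top (by omega) g
        rw [hrec (k+1) (ℓ+1) (by omega) (by omega) ω]
        simp only [Nat.add_sub_cancel]
        rw [ihk (ℓ+1) ω, ihk ℓ ω, ihℓ ω, hγeq]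
        simp only [split, Finset.sum_add_distrib]
        have hak := hpow1 α hα2 k
        have hbl := hpow1 β hβ2 ℓ
        simp only [pow_succ]
        linear_combination (-(ε (k+1) (ℓ+1) ω) * α^2 * (β^ℓ*β^ℓ) * β^2) * hak +
          (-(ε (k+1) (ℓ+1) ω) * β^2) * hbl +
          (-(ε (k+1) (ℓ+1) ω) * (β^ℓ*β^ℓ) * β^2) * hα2 +
          (-(ε (k+1) (ℓ+1) ω)) * hβ2
  -- variance formula
  have hMem : ∀ (p : {p : ℕ × ℕ // 1 ≤ p.1 ∧ 1 ≤ p.2}), MemLp (ε p.1.1 p.1.2) 2 P := by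
    intro p
    by_contra h
    have htop := evariance_eq_top (hmeas p.1.1 p.1.2).aestronglyMeasurable h
    have hv := hvar p.1.1 p.1.2 p.2.1 p.2.2
    rw [variance, htop] at hv
    simp at hv
  have hvarX : ∀ k ℓ : ℕ, variance (X k ℓ) P = (k : ℝ) * (ℓ : ℝ) := by
    intro k ℓ
    set c : ℕ × ℕ → ℝ := fun p => α ^ k * β ^ ℓ * (α ^ p.1 * β ^ p.2) with hc
    set T : Finset {p : ℕ × ℕ // 1 ≤ p.1 ∧ 1 ≤ p.2} :=
      (Finset.Icc 1 k ×ˢ Finset.Icc 1 ℓ).subtype _ with hT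
    have hmemprod : ∀ p ∈ Finset.Icc 1 k ×ˢ Finset.Icc 1 ℓ, 1 ≤ p.1 ∧ 1 ≤ p.2 := by
      intro p hp
      simp only [Finset.mem_product, Finset.mem_Icc] at hp
      exact ⟨hp.1.1, hp.2.1⟩
    have hXeq : X k ℓ = ∑ q ∈ T, (fun ω => c q.1 * ε q.1.1 q.1.2 ω) := by
      funext ω
      rw [key k ℓ ω]
      rw [Finset.sum_apply]
      rw [Finset.sum_subtype_of_mem (fun p => c p * ε p.1 p.2 ω) hmemprod]
      rw [Finset.sum_product]
      rw [Finset.mul_sum]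
      congr 1; funext i
      rw [Finset.mul_sum]
      congr 1; funext j
      simp [hc]; ring
    rw [hXeq]
    rw [IndepFun.variance_sum
      (fun q _ => (hMem q).const_mul (c q.1))
      (fun q1 _ q2 _ hne =>
        (hindep.indepFun hne).comp (measurable_const_mul (c q1.1)) (measurable_const_mul (c q2.1)))]
    have hcval : ∀ (q : {p : ℕ × ℕ // 1 ≤ p.1 ∧ 1 ≤ p.2}),
        variance (fun ω => c q.1 * ε q.1.1 q.1.2 ω) P = (c q.1) ^ 2 * variance (ε q.1.1 q.1.2) P :=
      fun q => variance_const_mul (c q.1) (ε q.1.1 q.1.2) P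
    have hc2 : ∀ (q : {p : ℕ × ℕ // 1 ≤ p.1 ∧ 1 ≤ p.2}), (c q.1) ^ 2 = 1 := by
      intro q
      have h1 := hpow1 α hα2 k
      have h2 := hpow1 β hβ2 ℓ
      have h3 := hpow1 α hα2 q.1.1
      have h4 := hpow1 β hβ2 q.1.2
      simp only [hc]
      linear_combination (β^ℓ*β^ℓ*α^(q.1.1)*α^(q.1.1)*β^(q.1.2)*β^(q.1.2)) * h1 +
        (α^(q.1.1)*α^(q.1.1)*β^(q.1.2)*β^(q.1.2)) * h2 +
        (β^(q.1.2)*β^(q.1.2)) * h3 + h4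
    have : ∑ q ∈ T, variance (fun ω => c q.1 * ε q.1.1 q.1.2 ω) P = ∑ q ∈ T, (1 : ℝ) := by
      refine Finset.sum_congr rfl fun q hq => ?_
      rw [hcval q, hc2 q, one_mul, hvar q.1.1 q.1.2 q.2.1 q.2.2]
    rw [this, Finset.sum_const, nsmul_eq_mul, mul_one]
    have hcard : T.card = k * ℓ := by
      rw [hT, Finset.card_subtype, Finset.filter_true_of_mem hmemprod, Finset.card_product,
        Nat.card_Icc, Nat.card_Icc]
      simp
    rw [hcard]
    push_cast
    ring
  -- limit
  intro s t hs ht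
  have h1 : Tendsto (fun n : ℕ => ((⌊s * (n : ℝ)⌋₊ : ℝ) / n)) atTop (nhds s) :=
    (tendsto_nat_floor_mul_div_atTop hs.le).comp tendsto_natCast_atTop_atTop
  have h2 : Tendsto (fun n : ℕ => ((⌊t * (n : ℝ)⌋₊ : ℝ) / n)) atTop (nhds t) :=
    (tendsto_nat_floor_mul_div_atTop ht.le).comp tendsto_natCast_atTop_atTop
  have hmul := h1.mul h2
  refine Tendsto.congr' ?_ hmul
  filter_upwards [eventually_ge_atTop 1] with n hn
  have hn0 : (n : ℝ) ≠ 0 := by positivity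
  rw [hvarX]
  rw [mul_comm s (n:ℝ), mul_comm t (n:ℝ)]
  rw [div_mul_div_comm, sq]
  ring
end
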